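/- arXiv:2512.12407 — 2 statements merged into one kernel-verified Lean document; each statement's English description precedes it below -/
import Mathlib

section
/- (Lemma 3.4.) For i = 1, …, q let C_i ∈ ℂ^{p_i×p_i} be a matrix in *congruence canonical form given by explicit block data, i.e., C_i = ⊕_j J_{k_j^{(i)}}(0) ⊕ ⊕_j α_j^{(i)}Γ_{ℓ_j^{(i)}} ⊕ ⊕_j H_{2m_j^{(i)}}(μ_j^{(i)}) with |α_j^{(i)}| = 1 and |μ_j^{(i)}| > 1, and let A_i ∈ ℬ*(C_i). Suppose that for all i ≠ j: 𝒮*_{Γ,2}(C_i) ∩ 𝒮*_{Γ,2}(C_j) = ∅, 𝒮*_{Γ,2}(C_i) ∩ 𝒮*_{Γ,2,neg}(C_j) = ∅, and 𝒮*_H(C_i) ∩ 𝒮*_H(C_j) = ∅. Then A_1 ⊕ ⋯ ⊕ A_q belongs to the closure of ℬ*(C_1 ⊕ ⋯ ⊕ C_q). Moreover, if in addition A_i = P_i D_i P_iᴴ with P_i invertible and D_i a canonical matrix whose parameters satisfy the constraints in the definition of ℬ*(C_i), and the parameter-set disjointness conditions above hold with D_i, D_j in place of C_i, C_j for all i ≠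 j, then A_1 ⊕ ⋯ ⊕ A_q ∈ ℬ*(C_1 ⊕ ⋯ ⊕ C_q). -/
open Matrix

noncomputable section

/-- The `k × k` Jordan block `J_k(μ)` (eigenvalue `μ` on the diagonal, `1` on the
superdiagonal). -/
def Jblock (k : ℕ) (μ : ℂ) : Matrix (Fin k) (Fin k) ℂ :=
  Matrix.of fun i j =>
    if (j : ℕ) = (i : ℕ) then μ else if (j : ℕ) = (i : ℕ) + 1 then 1 else 0

/-- The `k × k` matrix `Γ_k`: in 1-based indexing, the `(i,j)` entry is `(-1)^(k-i)`
when `j = k+1-i` or `j = k+2-i`, and `0` otherwise. -/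
def Gamma (k : ℕ) : Matrix (Fin k) (Fin k) ℂ :=
  Matrix.of fun i j =>
    if (i : ℕ) + (j : ℕ) = k - 1 ∨ (i : ℕ) + (j : ℕ) = k then
      (-1 : ℂ) ^ (k - 1 - (i : ℕ)) else 0

/-- Block-diagonal direct sum of two square complex matrices. -/
def dsum {m n : ℕ} (A : Matrix (Fin m) (Fin m) ℂ) (B : Matrix (Fin n) (Fin n) ℂ) :
    Matrix (Fin (m + n)) (Fin (m + n)) ℂ :=
  Matrix.reindex finSumFinEquiv finSumFinEquiv (Matrix.fromBlocks A 0 0 B)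

/-- The `2k × 2k` matrix `H_{2k}(μ) = [[0, I_k], [J_k(μ), 0]]`. -/
def Hblock (k : ℕ) (μ : ℂ) : Matrix (Fin (k + k)) (Fin (k + k)) ℂ :=
  Matrix.reindex finSumFinEquiv finSumFinEquiv (Matrix.fromBlocks 0 1 (Jblock k μ) 0)

/-- The total size of a family of sizes `p : Fin q → ℕ`. -/
def finSize : {q : ℕ} → (Fin q → ℕ) → ℕ
  | 0, _ => 0
  | _ + 1, p => p 0 + finSize fun i => p i.succ

/-- Block-diagonal direct sum of a family of square complex matrices of sizes
`p 0, …, p (q-1)`. -/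
def finDsum : {q : ℕ} → (p : Fin q → ℕ) →
    ((i : Fin q) → Matrix (Fin (p i)) (Fin (p i)) ℂ) →
    Matrix (Fin (finSize p)) (Fin (finSize p)) ℂ
  | 0, _, _ => 0
  | _ + 1, p, M => dsum (M 0) (finDsum (fun i => p i.succ) fun i => M i.succ)

/-- Block data of a matrix in *congruence canonical form
`⊕ J_{k_i}(0) ⊕ ⊕ α_i Γ_{l_i} ⊕ ⊕ H_{2 m_i}(μ_i)`. -/
structure StarData : Type where
  n1 : ℕ
  n2 : ℕ
  n3 : ℕ
  k : Fin n1 → ℕ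
  l : Fin n2 → ℕ
  a : Fin n2 → ℂ
  m : Fin n3 → ℕ
  mu : Fin n3 → ℂ

/-- The size of the canonical matrix described by the block data. -/
def StarData.size (d : StarData) : ℕ :=
  finSize d.k + (finSize d.l + finSize fun i => d.m i + d.m i)

/-- The canonical matrix with the block structure of `d` but with the Type I and
Type II parameters replaced by `a` and `mu`. -/
def StarData.matWith (d : StarData) (a : Fin d.n2 → ℂ) (mu : Fin d.n3 → ℂ) :
    Matrix (Fin d.size) (Fin d.size) ℂ :=
  dsum (finDsum d.k fun i => Jblock (d.k i) 0)
    (dsum (finDsum d.l fun i => a i • Gamma (d.l i))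
      (finDsum (fun i => d.m i + d.m i) fun i => Hblock (d.m i) (mu i)))

/-- Validity of the block data: all sizes are at least `1`, `|α_i| = 1` and
`|μ_i| > 1`. -/
def StarData.Valid (d : StarData) : Prop :=
  (∀ i, 1 ≤ d.k i) ∧ (∀ i, 1 ≤ d.l i) ∧ (∀ i, 1 ≤ d.m i) ∧
    (∀ i, ‖d.a i‖ = 1) ∧ ∀ i, 1 < ‖d.mu i‖

/-- The constraints that the replaced parameters must satisfy in the definition of the
*congruence bundle of `d`. -/
def StarData.ParamsOK (d : StarData) (a : Fin d.n2 → ℂ) (mu : Fin d.n3 → ℂ) : Prop :=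
  (∀ i, ‖a i‖ = 1) ∧ (∀ i, 1 < ‖mu i‖) ∧
    (∀ i j, d.l i % 2 = d.l j % 2 → (a i ^ 2 ≠ a j ^ 2 ↔ d.a i ^ 2 ≠ d.a j ^ 2)) ∧
    (∀ i j, d.l i % 2 ≠ d.l j % 2 → (a i ^ 2 ≠ -(a j ^ 2) ↔ d.a i ^ 2 ≠ -(d.a j ^ 2))) ∧
    ∀ i j, mu i ≠ mu j ↔ d.mu i ≠ d.mu j

/-- The *congruence bundle `ℬ*(C)` of the canonical matrix `C` described by the block
data `d`. -/
def starBundle (d : StarData) : Set (Matrix (Fin d.size) (Fin d.size) ℂ) :=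
  {A | ∃ (a : Fin d.n2 → ℂ) (mu : Fin d.n3 → ℂ) (P : Matrix (Fin d.size) (Fin d.size) ℂ),
    IsUnit P ∧ d.ParamsOK a mu ∧ A = P * d.matWith a mu * Pᴴ}

/-- The parameter set `𝒮*_{Γ,2}(C) = {α_i² : 1 ≤ i ≤ n2}`. -/
def StarData.SG2 (d : StarData) : Set ℂ := Set.range fun i => d.a i ^ 2

/-- The parameter set `𝒮*_{Γ,2,neg}(C) = {-α_i² : 1 ≤ i ≤ n2}`. -/
def StarData.SG2neg (d : StarData) : Set ℂ := Set.range fun i => -(d.a i ^ 2)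

/-- The parameter set `𝒮*_H(C) = {μ_i : 1 ≤ i ≤ n3}`. -/
def StarData.SH (d : StarData) : Set ℂ := Set.range d.mu

/-- The direct sum of two canonical matrices: concatenation of the block data. -/
def StarData.append (d e : StarData) : StarData :=
  ⟨d.n1 + e.n1, d.n2 + e.n2, d.n3 + e.n3, Fin.append d.k e.k, Fin.append d.l e.l,
    Fin.append d.a e.a, Fin.append d.m e.m, Fin.append d.mu e.mu⟩

/-- The direct sum `C_1 ⊕ ⋯ ⊕ C_q` of a family of canonical matrices: concatenation of
the block data.  -/
def appendAll : {q : ℕ} → (Fin q → StarData) → StarData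
  | 0, _ => ⟨0, 0, 0, Fin.elim0, Fin.elim0, Fin.elim0, Fin.elim0, Fin.elim0⟩
  | _ + 1, C => StarData.append (C 0) (appendAll fun i => C i.succ)

/-- Heterogeneous congruence of square complex matrices. -/
def Cong {m n : ℕ} (A : Matrix (Fin m) (Fin m) ℂ) (B : Matrix (Fin n) (Fin n) ℂ) : Prop :=
  ∃ (P : Matrix (Fin m) (Fin n) ℂ) (Q : Matrix (Fin n) (Fin m) ℂ),
    P * Q = 1 ∧ Q * P = 1 ∧ A = P * B * Pᴴ

lemma cong_refl {m : ℕ} (A : Matrix (Fin m) (Fin m) ℂ) : Cong A A :=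
  ⟨1, 1, by simp, by simp, by simp⟩

lemma cong_symm {m n : ℕ} {A : Matrix (Fin m) (Fin m) ℂ} {B : Matrix (Fin n) (Fin n) ℂ}
    (h : Cong A B) : Cong B A := by
  obtain ⟨P, Q, h1, h2, rfl⟩ := h
  refine ⟨Q, P, h2, h1, ?_⟩
  calc B = (Q * P) * B * (Q * P)ᴴ := by simp [h2]
    _ = Q * (P * B * Pᴴ) * Qᴴ := by
        simp only [conjTranspose_mul, Matrix.mul_assoc]

lemma cong_trans {m n p : ℕ} {A : Matrix (Fin m) (Fin m) ℂ} {B : Matrix (Fin n) (Fin n) ℂ}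
    {D : Matrix (Fin p) (Fin p) ℂ} (h : Cong A B) (h' : Cong B D) : Cong A D := by
  obtain ⟨P, Q, h1, h2, rfl⟩ := h
  obtain ⟨P', Q', h1', h2', rfl⟩ := h'
  refine ⟨P * P', Q' * Q, ?_, ?_, ?_⟩
  · calc P * P' * (Q' * Q) = P * (P' * Q') * Q := by simp [Matrix.mul_assoc]
      _ = 1 := by rw [h1']; simp [h1]
  · calc Q' * Q * (P * P') = Q' * (Q * P) * P' := by simp [Matrix.mul_assoc]
      _ = 1 := by rw [h2]; simp [h2']
  · simp only [conjTranspose_mul, Matrix.mul_assoc]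

lemma cong_of_entries {m n : ℕ} (e : Fin m ≃ Fin n) (A : Matrix (Fin m) (Fin m) ℂ)
    (B : Matrix (Fin n) (Fin n) ℂ) (h : ∀ i j, A i j = B (e i) (e j)) : Cong A B := by
  refine ⟨(e.toPEquiv.toMatrix : Matrix (Fin m) (Fin n) ℂ),
    (e.symm.toPEquiv.toMatrix : Matrix (Fin n) (Fin m) ℂ), ?_, ?_, ?_⟩
  · rw [← PEquiv.toMatrix_trans, ← Equiv.toPEquiv_trans, Equiv.self_trans_symm,
      Equiv.toPEquiv_refl, PEquiv.toMatrix_refl]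
  · rw [← PEquiv.toMatrix_trans, ← Equiv.toPEquiv_trans, Equiv.symm_trans_self,
      Equiv.toPEquiv_refl, PEquiv.toMatrix_refl]
  · have hH : (e.toPEquiv.toMatrix : Matrix (Fin m) (Fin n) ℂ)ᴴ
        = (e.symm.toPEquiv.toMatrix : Matrix (Fin n) (Fin m) ℂ) := by
      rw [Equiv.toPEquiv_symm, PEquiv.toMatrix_symm]
      ext i j
      simp [Matrix.conjTranspose_apply, Matrix.transpose_apply, apply_ite (star : ℂ → ℂ)]
    rw [hH]
    ext i j
    rw [Matrix.mul_assoc, PEquiv.toMatrix_mul_apply, Equiv.toPEquiv_apply]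
    show A i j = ((B * e.symm.toPEquiv.toMatrix : Matrix (Fin n) (Fin m) ℂ)) (e i) j
    rw [PEquiv.mul_toMatrix_apply, ← Equiv.toPEquiv_symm, Equiv.toPEquiv_apply]
    exact h i j

lemma finSumFinEquiv_symm_dite {m n : ℕ} (i : Fin (m + n)) :
    finSumFinEquiv.symm i = if h : (i : ℕ) < m then Sum.inl ⟨i, h⟩
      else Sum.inr ⟨(i : ℕ) - m, by omega⟩ := by
  rcases lt_or_ge (i : ℕ) m with h | h
  · rw [dif_pos h, Equiv.symm_apply_eq, finSumFinEquiv_apply_left]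
    exact Fin.ext rfl
  · rw [dif_neg (not_lt.mpr h), Equiv.symm_apply_eq, finSumFinEquiv_apply_right]
    exact Fin.ext (by simp [Fin.natAdd]; omega)

lemma dsum_apply {m n : ℕ} (A : Matrix (Fin m) (Fin m) ℂ) (B : Matrix (Fin n) (Fin n) ℂ)
    (i j : Fin (m + n)) :
    dsum A B i j = if h : (i : ℕ) < m ∧ (j : ℕ) < m then A ⟨i, h.1⟩ ⟨j, h.2⟩
      else if h' : m ≤ (i : ℕ) ∧ m ≤ (j : ℕ) then
        B ⟨(i : ℕ) - m, by omega⟩ ⟨(j : ℕ) - m, by omega⟩ else 0 := by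
  simp only [dsum, reindex_apply, submatrix_apply, finSumFinEquiv_symm_dite]
  rcases lt_or_ge (i : ℕ) m with hi | hi <;> rcases lt_or_ge (j : ℕ) m with hj | hj
  · rw [dif_pos hi, dif_pos hj, dif_pos ⟨hi, hj⟩, Matrix.fromBlocks_apply₁₁]
  · rw [dif_pos hi, dif_neg (not_lt.mpr hj), dif_neg (by omega), dif_neg (by omega),
      Matrix.fromBlocks_apply₁₂]
    rfl
  · rw [dif_neg (not_lt.mpr hi), dif_pos hj, dif_neg (by omega), dif_neg (by omega),
      Matrix.fromBlocks_apply₂₁]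
    rfl
  · rw [dif_neg (not_lt.mpr hi), dif_neg (not_lt.mpr hj), dif_neg (by omega),
      dif_pos ⟨hi, hj⟩, Matrix.fromBlocks_apply₂₂]

lemma dsum_mul {m n : ℕ} (A A' : Matrix (Fin m) (Fin m) ℂ) (B B' : Matrix (Fin n) (Fin n) ℂ) :
    dsum A B * dsum A' B' = dsum (A * A') (B * B') := by
  simp only [dsum, reindex_apply, Matrix.submatrix_mul_equiv, Matrix.fromBlocks_multiply]
  simp

/-- Rectangular block-diagonal sum (for congruence witnesses). -/
def dsumR {m n m' n' : ℕ} (P : Matrix (Fin m) (Fin m') ℂ) (Q : Matrix (Fin n) (Fin n') ℂ) :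
    Matrix (Fin (m + n)) (Fin (m' + n')) ℂ :=
  Matrix.reindex finSumFinEquiv finSumFinEquiv (Matrix.fromBlocks P 0 0 Q)

lemma dsum_eq_dsumR {m n : ℕ} (A : Matrix (Fin m) (Fin m) ℂ) (B : Matrix (Fin n) (Fin n) ℂ) :
    dsum A B = dsumR A B := rfl

lemma dsumR_mul {m n m' n' m'' n'' : ℕ} (P : Matrix (Fin m) (Fin m') ℂ)
    (Q : Matrix (Fin n) (Fin n') ℂ) (P' : Matrix (Fin m') (Fin m'') ℂ)
    (Q' : Matrix (Fin n') (Fin n'') ℂ) :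
    dsumR P Q * dsumR P' Q' = dsumR (P * P') (Q * Q') := by
  simp only [dsumR, reindex_apply, Matrix.submatrix_mul_equiv, Matrix.fromBlocks_multiply]
  simp

lemma dsumR_conjTranspose {m n m' n' : ℕ} (P : Matrix (Fin m) (Fin m') ℂ)
    (Q : Matrix (Fin n) (Fin n') ℂ) : (dsumR P Q)ᴴ = dsumR Pᴴ Qᴴ := by
  simp only [dsumR, reindex_apply, Matrix.conjTranspose_submatrix,
    Matrix.fromBlocks_conjTranspose]
  simp

lemma dsumR_one {m n : ℕ} : dsumR (1 : Matrix (Fin m) (Fin m) ℂ) (1 : Matrix (Fin n) (Fin n) ℂ)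
    = 1 := by
  simp only [dsumR, reindex_apply, Matrix.fromBlocks_one]
  rw [Matrix.submatrix_one_equiv]

lemma cong_dsum {m n m' n' : ℕ} {A : Matrix (Fin m) (Fin m) ℂ} {A' : Matrix (Fin m') (Fin m') ℂ}
    {B : Matrix (Fin n) (Fin n) ℂ} {B' : Matrix (Fin n') (Fin n') ℂ}
    (h : Cong A A') (h' : Cong B B') : Cong (dsum A B) (dsum A' B') := by
  obtain ⟨P, Q, h1, h2, rfl⟩ := h
  obtain ⟨P', Q', h1', h2', rfl⟩ := h'
  exact ⟨dsumR P P', dsumR Q Q', by rw [dsumR_mul, h1, h1', dsumR_one],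
    by rw [dsumR_mul, h2, h2', dsumR_one],
    by rw [dsum_eq_dsumR, dsum_eq_dsumR, dsumR_conjTranspose, dsumR_mul, dsumR_mul]⟩

lemma appendD {α : Sort*} {m n : ℕ} (u : Fin m → α) (v : Fin n → α) (i : Fin (m + n)) :
    Fin.append u v i = if h : (i : ℕ) < m then u ⟨i, h⟩ else v ⟨(i : ℕ) - m, by omega⟩ := by
  rcases lt_or_ge (i : ℕ) m with h | h
  · rw [dif_pos h]
    conv_lhs => rw [show i = Fin.castAdd n ⟨i, h⟩ from Fin.ext rfl]
    rw [Fin.append_left]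
  · rw [dif_neg (not_lt.mpr h)]
    conv_lhs => rw [show i = Fin.natAdd m ⟨(i : ℕ) - m, by omega⟩ from
      Fin.ext (by simp [Fin.natAdd]; omega)]
    rw [Fin.append_right]

lemma cong_zero_left {n : ℕ} (Z : Matrix (Fin 0) (Fin 0) ℂ) (B : Matrix (Fin n) (Fin n) ℂ) :
    Cong (dsum Z B) B := by
  apply cong_of_entries (finCongr (Nat.zero_add n))
  intro i j
  rw [dsum_apply, dif_neg (by omega), dif_pos ⟨Nat.zero_le _, Nat.zero_le _⟩]
  congr 1 <;> exact Fin.ext (by simp)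

lemma cong_assoc {a b c : ℕ} (A : Matrix (Fin a) (Fin a) ℂ) (B : Matrix (Fin b) (Fin b) ℂ)
    (C : Matrix (Fin c) (Fin c) ℂ) : Cong (dsum (dsum A B) C) (dsum A (dsum B C)) := by
  apply cong_of_entries (finCongr (Nat.add_assoc a b c))
  intro i j
  simp only [dsum_apply, finCongr_apply, Fin.coe_cast]
  split_ifs <;> first
    | rfl | omega | (congr 1 <;> exact Fin.ext (by simp <;> omega))

/-- The obvious equivalence `Fin (m+n) ≃ Fin (n+m)` exchanging the two blocks. -/
def addComm' (m n : ℕ) : Fin (m + n) ≃ Fin (n + m) where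
  toFun i := ⟨if (i : ℕ) < m then (i : ℕ) + n else (i : ℕ) - m, by split_ifs <;> omega⟩
  invFun i := ⟨if (i : ℕ) < n then (i : ℕ) + m else (i : ℕ) - n, by split_ifs <;> omega⟩
  left_inv i := by
    apply Fin.ext
    simp only
    split_ifs <;> omega
  right_inv i := by
    apply Fin.ext
    simp only
    split_ifs <;> omega

lemma cong_comm {m n : ℕ} (A : Matrix (Fin m) (Fin m) ℂ) (B : Matrix (Fin n) (Fin n) ℂ) :
    Cong (dsum A B) (dsum B A) := by
  apply cong_of_entries (addComm' m n)
  intro i j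
  simp only [dsum_apply, addComm', Equiv.coe_fn_mk]
  split_ifs <;> first
    | rfl | omega | (congr 1 <;> exact Fin.ext (by simp <;> omega))

lemma cong_exchange {a b c d : ℕ} (A : Matrix (Fin a) (Fin a) ℂ) (B : Matrix (Fin b) (Fin b) ℂ)
    (C : Matrix (Fin c) (Fin c) ℂ) (D : Matrix (Fin d) (Fin d) ℂ) :
    Cong (dsum (dsum A B) (dsum C D)) (dsum (dsum A C) (dsum B D)) := by
  refine cong_trans (cong_assoc _ _ _) (cong_trans ?_ (cong_symm (cong_assoc _ _ _)))
  refine cong_dsum (cong_refl A) ?_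
  refine cong_trans (cong_symm (cong_assoc _ _ _)) (cong_trans ?_ (cong_assoc _ _ _))
  exact cong_dsum (cong_comm _ _) (cong_refl D)

lemma cong_shuffle {a a' b b' c c' : ℕ} (A : Matrix (Fin a) (Fin a) ℂ)
    (A' : Matrix (Fin a') (Fin a') ℂ) (B : Matrix (Fin b) (Fin b) ℂ)
    (B' : Matrix (Fin b') (Fin b') ℂ) (C : Matrix (Fin c) (Fin c) ℂ)
    (C' : Matrix (Fin c') (Fin c') ℂ) :
    Cong (dsum (dsum A A') (dsum (dsum B B') (dsum C C')))
      (dsum (dsum A (dsum B C)) (dsum A' (dsum B' C'))) := by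
  refine cong_symm (cong_trans (cong_exchange _ _ _ _) ?_)
  exact cong_dsum (cong_refl _) (cong_exchange _ _ _ _)

lemma finSize_succ {n : ℕ} (p : Fin (n + 1) → ℕ) :
    finSize p = p 0 + finSize (fun i => p i.succ) := rfl

lemma finSize_cast {n n' : ℕ} (h : n = n') (p : Fin n → ℕ) (p' : Fin n' → ℕ)
    (hp : ∀ i, p' i = p (Fin.cast h.symm i)) : finSize p' = finSize p := by
  subst h
  have : p' = p := funext fun i => (hp i).trans (congrArg p (Fin.ext rfl))
  rw [this]

lemma finSize_append {n n' : ℕ} (p : Fin n → ℕ) (p' : Fin n' → ℕ) :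
    finSize (Fin.append p p') = finSize p + finSize p' := by
  induction n with
  | zero =>
    have h2 : finSize (Fin.append p p') = finSize p' := by
      refine finSize_cast (Nat.zero_add n').symm p' _ fun i => ?_
      rw [appendD, dif_neg (by omega)]
      exact congrArg p' (Fin.ext (by simp))
    rw [h2]
    show finSize p' = 0 + finSize p'
    omega
  | succ k ih =>
    have h : (k + 1) + n' = (k + n') + 1 := by omega
    rw [← finSize_cast h (Fin.append p p') _ (fun i => rfl), finSize_succ]
    have h0 : Fin.append p p' (Fin.cast h.symm 0) = p 0 := by
      rw [appendD, dif_pos (by simp)]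
      exact congrArg p (Fin.ext rfl)
    have htail : (fun i : Fin (k + n') => Fin.append p p' (Fin.cast h.symm i.succ))
        = Fin.append (fun t => p t.succ) p' := by
      funext i
      rw [appendD, appendD]
      simp only [Fin.coe_cast, Fin.val_succ]
      split_ifs with h1 h2
      · exact congrArg p (Fin.ext (by simp))
      · omega
      · omega
      · exact congrArg p' (Fin.ext (by simp <;> omega))
    rw [h0, htail, ih, finSize_succ p]
    omega

section TGF

variable {T : Type*} (g : T → ℕ) (F : (t : T) → Matrix (Fin (g t)) (Fin (g t)) ℂ)

lemma finDsum_ptwise {n : ℕ} (c c'' : Fin n → T) (h : ∀ i, c i = c'' i) :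
    Cong (finDsum (fun i => g (c i)) (fun i => F (c i)))
      (finDsum (fun i => g (c'' i)) (fun i => F (c'' i))) := by
  have : c = c'' := funext h
  subst this
  exact cong_refl _

lemma finDsum_cast {n n' : ℕ} (h : n = n') (c : Fin n → T) (c' : Fin n' → T)
    (hc : ∀ i, c' i = c (Fin.cast h.symm i)) :
    Cong (finDsum (fun i => g (c' i)) (fun i => F (c' i)))
      (finDsum (fun i => g (c i)) (fun i => F (c i))) := by
  subst h
  have : c' = c := funext fun i => (hc i).trans (congrArg c (Fin.ext rfl))
  subst this
  exact cong_refl _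

lemma finDsum_step {k : ℕ} (c0 : Fin (k + 1) → T) (t0 : T) (ctail : Fin k → T)
    (h0 : c0 0 = t0) (ht : ∀ i, c0 i.succ = ctail i) :
    Cong (finDsum (fun i => g (c0 i)) (fun i => F (c0 i)))
      (dsum (F t0) (finDsum (fun i => g (ctail i)) (fun i => F (ctail i)))) := by
  have hhead : Cong (F (c0 0)) (F t0) := by rw [h0]; exact cong_refl _
  exact cong_dsum hhead (finDsum_ptwise g F _ _ ht)

lemma finDsum_append {n n' : ℕ} (c : Fin n → T) (c' : Fin n' → T) :
    Cong (finDsum (fun i => g (Fin.append c c' i)) (fun i => F (Fin.append c c' i)))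
      (dsum (finDsum (fun i => g (c i)) (fun i => F (c i)))
        (finDsum (fun i => g (c' i)) (fun i => F (c' i)))) := by
  induction n with
  | zero =>
    refine cong_trans ?_ (cong_symm (cong_zero_left _ _))
    refine finDsum_cast g F (Nat.zero_add n').symm c' _ fun i => ?_
    rw [appendD, dif_neg (by omega)]
    exact congrArg c' (Fin.ext (by simp))
  | succ k ih =>
    have h : (k + 1) + n' = (k + n') + 1 := by omega
    refine cong_trans (cong_symm (finDsum_cast g F h (Fin.append c c')
      (fun i => Fin.append c c' (Fin.cast h.symm i)) (fun i => rfl))) ?_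
    refine cong_trans (finDsum_step g F _ (c 0) (Fin.append (fun t => c t.succ) c') ?_ ?_) ?_
    · rw [appendD, dif_pos (by simp)]
      exact congrArg c (Fin.ext rfl)
    · intro i
      rw [appendD, appendD]
      simp only [Fin.coe_cast, Fin.val_succ]
      split_ifs with h1 h2
      · exact congrArg c (Fin.ext (by simp))
      · omega
      · omega
      · exact congrArg c' (Fin.ext (by simp <;> omega))
    · exact cong_trans (cong_dsum (cong_refl _) (ih _)) (cong_symm (cong_assoc _ _ _))

end TGF

lemma hm_pair {d e : StarData} :
    (fun i => Fin.append d.m e.m i + Fin.append d.m e.m i)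
      = Fin.append (fun i => d.m i + d.m i) (fun i => e.m i + e.m i) := by
  funext i
  rw [appendD d.m e.m, appendD]
  split_ifs <;> rfl

lemma size_append (d e : StarData) : (d.append e).size = d.size + e.size := by
  show finSize (Fin.append d.k e.k) + (finSize (Fin.append d.l e.l)
      + finSize (fun i => Fin.append d.m e.m i + Fin.append d.m e.m i)) = _
  rw [hm_pair, finSize_append, finSize_append, finSize_append]
  show _ = finSize d.k + (finSize d.l + finSize fun i => d.m i + d.m i)
      + (finSize e.k + (finSize e.l + finSize fun i => e.m i + e.m i))
  omega

lemma matWith_append (d e : StarData) (a : Fin d.n2 → ℂ) (a' : Fin e.n2 → ℂ)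
    (mu : Fin d.n3 → ℂ) (mu' : Fin e.n3 → ℂ) :
    Cong (dsum (d.matWith a mu) (e.matWith a' mu'))
      ((d.append e).matWith (Fin.append a a') (Fin.append mu mu')) := by
  refine cong_symm ?_
  have CongJ : Cong (finDsum (fun i => id (Fin.append d.k e.k i))
      (fun i => Jblock (Fin.append d.k e.k i) 0))
      (dsum (finDsum (fun i => id (d.k i)) (fun i => Jblock (d.k i) 0))
        (finDsum (fun i => id (e.k i)) (fun i => Jblock (e.k i) 0))) :=
    finDsum_append (id : ℕ → ℕ) (fun k => Jblock k 0) d.k e.k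
  have hpairG : ∀ i, Fin.append (fun i => (d.l i, a i)) (fun i => (e.l i, a' i)) i
      = (Fin.append d.l e.l i, Fin.append a a' i) := fun i => by
    rw [appendD, appendD d.l, appendD a]
    split_ifs <;> rfl
  have CongG : Cong (finDsum (fun i => (Fin.append d.l e.l i, Fin.append a a' i).1)
      (fun i => (Fin.append d.l e.l i, Fin.append a a' i).2
        • Gamma (Fin.append d.l e.l i, Fin.append a a' i).1))
      (dsum (finDsum (fun i => (d.l i, a i).1) (fun i => (d.l i, a i).2 • Gamma (d.l i, a i).1))
        (finDsum (fun i => (e.l i, a' i).1)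
          (fun i => (e.l i, a' i).2 • Gamma (e.l i, a' i).1))) :=
    cong_trans
      (cong_symm (finDsum_ptwise (Prod.fst : ℕ × ℂ → ℕ) (fun t => t.2 • Gamma t.1)
        _ _ hpairG))
      (finDsum_append (Prod.fst : ℕ × ℂ → ℕ) (fun t => t.2 • Gamma t.1) _ _)
  have hpairH : ∀ i, Fin.append (fun i => (d.m i, mu i)) (fun i => (e.m i, mu' i)) i
      = (Fin.append d.m e.m i, Fin.append mu mu' i) := fun i => by
    rw [appendD, appendD d.m, appendD mu]
    split_ifs <;> rfl
  have CongH : Cong (finDsum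
      (fun i => (Fin.append d.m e.m i, Fin.append mu mu' i).1
        + (Fin.append d.m e.m i, Fin.append mu mu' i).1)
      (fun i => Hblock (Fin.append d.m e.m i, Fin.append mu mu' i).1
        (Fin.append d.m e.m i, Fin.append mu mu' i).2))
      (dsum (finDsum (fun i => (d.m i, mu i).1 + (d.m i, mu i).1)
          (fun i => Hblock (d.m i, mu i).1 (d.m i, mu i).2))
        (finDsum (fun i => (e.m i, mu' i).1 + (e.m i, mu' i).1)
          (fun i => Hblock (e.m i, mu' i).1 (e.m i, mu' i).2))) :=
    cong_trans
      (cong_symm (finDsum_ptwise (fun t : ℕ × ℂ => t.1 + t.1) (fun t => Hblock t.1 t.2)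
        _ _ hpairH))
      (finDsum_append (fun t : ℕ × ℂ => t.1 + t.1) (fun t => Hblock t.1 t.2) _ _)
  exact cong_trans (cong_dsum CongJ (cong_dsum CongG CongH)) (cong_shuffle _ _ _ _ _ _)

lemma ParamsOK_append {d e : StarData} {a : Fin d.n2 → ℂ} {mu : Fin d.n3 → ℂ}
    {a' : Fin e.n2 → ℂ} {mu' : Fin e.n3 → ℂ}
    (hd : d.ParamsOK a mu) (he : e.ParamsOK a' mu')
    (x1 : ∀ s u, a s ^ 2 ≠ a' u ^ 2)
    (x2 : ∀ s u, a s ^ 2 ≠ -(a' u ^ 2))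
    (x2' : ∀ s u, a' s ^ 2 ≠ -(a u ^ 2))
    (x3 : ∀ s u, mu s ≠ mu' u)
    (y1 : ∀ s u, d.a s ^ 2 ≠ e.a u ^ 2)
    (y2 : ∀ s u, d.a s ^ 2 ≠ -(e.a u ^ 2))
    (y2' : ∀ s u, e.a s ^ 2 ≠ -(d.a u ^ 2))
    (y3 : ∀ s u, d.mu s ≠ e.mu u) :
    (d.append e).ParamsOK (Fin.append a a') (Fin.append mu mu') := by
  obtain ⟨hd1, hd2, hd3, hd4, hd5⟩ := hd
  obtain ⟨he1, he2, he3, he4, he5⟩ := he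
  refine ⟨?_, ?_, ?_, ?_, ?_⟩
  · intro (i : Fin (d.n2 + e.n2))
    rw [appendD]
    split_ifs <;> [exact hd1 _; exact he1 _]
  · intro (i : Fin (d.n3 + e.n3))
    rw [appendD]
    split_ifs <;> [exact hd2 _; exact he2 _]
  · intro (i : Fin (d.n2 + e.n2)) (j : Fin (d.n2 + e.n2)) hpar
    show (Fin.append a a' i) ^ 2 ≠ (Fin.append a a' j) ^ 2
      ↔ (Fin.append d.a e.a i) ^ 2 ≠ (Fin.append d.a e.a j) ^ 2
    have hl : StarData.l (d.append e) = Fin.append d.l e.l := rfl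
    rw [hl] at hpar
    simp only [appendD] at hpar ⊢
    split_ifs at hpar ⊢ with h1 h2
    · exact hd3 ⟨i, h1⟩ ⟨j, h2⟩ hpar
    · exact iff_of_true (x1 _ _) (y1 _ _)
    · exact iff_of_true (fun hh => x1 _ _ hh.symm) (fun hh => y1 _ _ hh.symm)
    · exact he3 _ _ hpar
  · intro (i : Fin (d.n2 + e.n2)) (j : Fin (d.n2 + e.n2)) hpar
    show (Fin.append a a' i) ^ 2 ≠ -((Fin.append a a' j) ^ 2)
      ↔ (Fin.append d.a e.a i) ^ 2 ≠ -((Fin.append d.a e.a j) ^ 2)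
    have hl : StarData.l (d.append e) = Fin.append d.l e.l := rfl
    rw [hl] at hpar
    simp only [appendD] at hpar ⊢
    split_ifs at hpar ⊢ with h1 h2
    · exact hd4 ⟨i, h1⟩ ⟨j, h2⟩ hpar
    · exact iff_of_true (x2 _ _) (y2 _ _)
    · exact iff_of_true (x2' _ _) (y2' _ _)
    · exact he4 _ _ hpar
  · intro (i : Fin (d.n3 + e.n3)) (j : Fin (d.n3 + e.n3))
    show Fin.append mu mu' i ≠ Fin.append mu mu' j
      ↔ Fin.append d.mu e.mu i ≠ Fin.append d.mu e.mu j
    simp only [appendD]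
    split_ifs with h1 h2
    · exact hd5 _ _
    · exact iff_of_true (x3 _ _) (y3 _ _)
    · exact iff_of_true (fun hh => x3 _ _ hh.symm) (fun hh => y3 _ _ hh.symm)
    · exact he5 _ _

lemma mem_starBundle_of_cong {d : StarData} {A : Matrix (Fin d.size) (Fin d.size) ℂ}
    {a : Fin d.n2 → ℂ} {mu : Fin d.n3 → ℂ} (hOK : d.ParamsOK a mu)
    (h : Cong A (d.matWith a mu)) : A ∈ starBundle d := by
  obtain ⟨P, Q, h1, h2, hEq⟩ := h
  exact ⟨a, mu, P, ⟨⟨P, Q, h1, h2⟩, rfl⟩, hOK, hEq⟩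

lemma cong_of_unit {n m : ℕ} {A : Matrix (Fin n) (Fin n) ℂ} {M : Matrix (Fin m) (Fin m) ℂ}
    {P : Matrix (Fin n) (Fin n) ℂ} (hn : n = m) (hU : IsUnit P)
    (hEq : A = P * (Matrix.reindex (finCongr hn.symm) (finCongr hn.symm) M) * Pᴴ) :
    Cong A M := by
  subst hn
  obtain ⟨u, rfl⟩ := hU
  refine cong_trans (B := Matrix.reindex (finCongr rfl) (finCongr rfl) M)
    ⟨u.val, u.inv, u.val_inv, u.inv_val, hEq⟩ ?_
  apply cong_of_entries (finCongr rfl)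
  intro i j
  simp

/-- The concatenation of the realized `Γ`-parameters. -/
def bigA : {q : ℕ} → (C : Fin q → StarData) → ((i : Fin q) → Fin (C i).n2 → ℂ) →
    Fin (appendAll C).n2 → ℂ
  | 0, _, _ => Fin.elim0
  | _ + 1, C, a => Fin.append (a 0) (bigA (fun i => C i.succ) (fun i => a i.succ))

/-- The concatenation of the realized `H`-parameters. -/
def bigMu : {q : ℕ} → (C : Fin q → StarData) → ((i : Fin q) → Fin (C i).n3 → ℂ) →
    Fin (appendAll C).n3 → ℂ
  | 0, _, _ => Fin.elim0
  | _ + 1, C, mu => Fin.append (mu 0) (bigMu (fun i => C i.succ) (fun i => mu i.succ))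

lemma bigA_mem {q : ℕ} (C : Fin q → StarData) (a : (i : Fin q) → Fin (C i).n2 → ℂ)
    (u : Fin (appendAll C).n2) : ∃ i t, bigA C a u = a i t := by
  induction q with
  | zero => exact u.elim0
  | succ k ih =>
    show ∃ i t, Fin.append (a 0) (bigA (fun i => C i.succ) (fun i => a i.succ)) u = a i t
    rw [appendD (a 0) (bigA (fun i => C i.succ) (fun i => a i.succ)) u]
    split_ifs with h
    · exact ⟨0, _, rfl⟩
    · obtain ⟨i, t, ht⟩ := ih (fun i => C i.succ) (fun i => a i.succ) _
      exact ⟨i.succ, t, ht⟩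

lemma bigMu_mem {q : ℕ} (C : Fin q → StarData) (mu : (i : Fin q) → Fin (C i).n3 → ℂ)
    (u : Fin (appendAll C).n3) : ∃ i t, bigMu C mu u = mu i t := by
  induction q with
  | zero => exact u.elim0
  | succ k ih =>
    show ∃ i t, Fin.append (mu 0) (bigMu (fun i => C i.succ) (fun i => mu i.succ)) u = mu i t
    rw [appendD (mu 0) (bigMu (fun i => C i.succ) (fun i => mu i.succ)) u]
    split_ifs with h
    · exact ⟨0, _, rfl⟩
    · obtain ⟨i, t, ht⟩ := ih (fun i => C i.succ) (fun i => mu i.succ) _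
      exact ⟨i.succ, t, ht⟩

lemma appendAll_a_mem {q : ℕ} (C : Fin q → StarData) (u : Fin (appendAll C).n2) :
    ∃ i t, (appendAll C).a u = (C i).a t := by
  induction q with
  | zero => exact u.elim0
  | succ k ih =>
    show ∃ i t, Fin.append (C 0).a (appendAll fun i => C i.succ).a u = (C i).a t
    rw [appendD (C 0).a (appendAll fun i => C i.succ).a u]
    split_ifs with h
    · exact ⟨0, _, rfl⟩
    · obtain ⟨i, t, ht⟩ := ih (fun i => C i.succ) _
      exact ⟨i.succ, t, ht⟩

lemma appendAll_mu_mem {q : ℕ} (C : Fin q → StarData) (u : Fin (appendAll C).n3) :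
    ∃ i t, (appendAll C).mu u = (C i).mu t := by
  induction q with
  | zero => exact u.elim0
  | succ k ih =>
    show ∃ i t, Fin.append (C 0).mu (appendAll fun i => C i.succ).mu u = (C i).mu t
    rw [appendD (C 0).mu (appendAll fun i => C i.succ).mu u]
    split_ifs with h
    · exact ⟨0, _, rfl⟩
    · obtain ⟨i, t, ht⟩ := ih (fun i => C i.succ) _
      exact ⟨i.succ, t, ht⟩

lemma size_appendAll {q : ℕ} (C : Fin q → StarData) :
    finSize (fun i => (C i).size) = (appendAll C).size := by
  induction q with
  | zero => rfl
  | succ k ih =>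
    show (C 0).size + finSize (fun i => (C i.succ).size)
      = ((C 0).append (appendAll fun i => C i.succ)).size
    rw [size_append, ih (fun i => C i.succ)]

lemma big_paramsOK {q : ℕ} (C : Fin q → StarData) (a : (i : Fin q) → Fin (C i).n2 → ℂ)
    (mu : (i : Fin q) → Fin (C i).n3 → ℂ)
    (hOK : ∀ i, (C i).ParamsOK (a i) (mu i))
    (h1 : ∀ i j, i ≠ j → ∀ s u, a i s ^ 2 ≠ a j u ^ 2)
    (h2 : ∀ i j, i ≠ j → ∀ s u, a i s ^ 2 ≠ -(a j u ^ 2))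
    (h3 : ∀ i j, i ≠ j → ∀ s u, mu i s ≠ mu j u)
    (hc1 : ∀ i j, i ≠ j → ∀ s u, (C i).a s ^ 2 ≠ (C j).a u ^ 2)
    (hc2 : ∀ i j, i ≠ j → ∀ s u, (C i).a s ^ 2 ≠ -((C j).a u ^ 2))
    (hc3 : ∀ i j, i ≠ j → ∀ s u, (C i).mu s ≠ (C j).mu u) :
    (appendAll C).ParamsOK (bigA C a) (bigMu C mu) := by
  induction q with
  | zero =>
    exact ⟨fun i => i.elim0, fun i => i.elim0, fun i => i.elim0, fun i => i.elim0,
      fun i => i.elim0⟩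
  | succ k ih =>
    have hsne : ∀ (i j : Fin k), i ≠ j → i.succ ≠ j.succ :=
      fun i j hij hh => hij (Fin.succ_injective _ hh)
    refine ParamsOK_append (hOK 0)
      (ih (fun i => C i.succ) (fun i => a i.succ) (fun i => mu i.succ)
        (fun i => hOK i.succ)
        (fun i j hij => h1 i.succ j.succ (hsne i j hij))
        (fun i j hij => h2 i.succ j.succ (hsne i j hij))
        (fun i j hij => h3 i.succ j.succ (hsne i j hij))
        (fun i j hij => hc1 i.succ j.succ (hsne i j hij))
        (fun i j hij => hc2 i.succ j.succ (hsne i j hij))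
        (fun i j hij => hc3 i.succ j.succ (hsne i j hij)))
      ?_ ?_ ?_ ?_ ?_ ?_ ?_ ?_
    · intro s u
      obtain ⟨i, t, ht⟩ := bigA_mem (fun i => C i.succ) (fun i => a i.succ) u
      rw [ht]
      exact h1 0 i.succ (Fin.succ_ne_zero i).symm s t
    · intro s u
      obtain ⟨i, t, ht⟩ := bigA_mem (fun i => C i.succ) (fun i => a i.succ) u
      rw [ht]
      exact h2 0 i.succ (Fin.succ_ne_zero i).symm s t
    · intro s u
      obtain ⟨i, t, ht⟩ := bigA_mem (fun i => C i.succ) (fun i => a i.succ) s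
      rw [ht]
      exact h2 i.succ 0 (Fin.succ_ne_zero i) t u
    · intro s u
      obtain ⟨i, t, ht⟩ := bigMu_mem (fun i => C i.succ) (fun i => mu i.succ) u
      rw [ht]
      exact h3 0 i.succ (Fin.succ_ne_zero i).symm s t
    · intro s u
      obtain ⟨i, t, ht⟩ := appendAll_a_mem (fun i => C i.succ) u
      rw [ht]
      exact hc1 0 i.succ (Fin.succ_ne_zero i).symm s t
    · intro s u
      obtain ⟨i, t, ht⟩ := appendAll_a_mem (fun i => C i.succ) u
      rw [ht]
      exact hc2 0 i.succ (Fin.succ_ne_zero i).symm s t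
    · intro s u
      obtain ⟨i, t, ht⟩ := appendAll_a_mem (fun i => C i.succ) s
      rw [ht]
      exact hc2 i.succ 0 (Fin.succ_ne_zero i) t u
    · intro s u
      obtain ⟨i, t, ht⟩ := appendAll_mu_mem (fun i => C i.succ) u
      rw [ht]
      exact hc3 0 i.succ (Fin.succ_ne_zero i).symm s t

lemma big_cong {q : ℕ} (C : Fin q → StarData) (a : (i : Fin q) → Fin (C i).n2 → ℂ)
    (mu : (i : Fin q) → Fin (C i).n3 → ℂ)
    (A : (i : Fin q) → Matrix (Fin (C i).size) (Fin (C i).size) ℂ)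
    (hP : ∀ i, ∃ P, IsUnit P ∧ A i = P * (C i).matWith (a i) (mu i) * Pᴴ) :
    Cong (finDsum (fun i => (C i).size) A)
      ((appendAll C).matWith (bigA C a) (bigMu C mu)) := by
  induction q with
  | zero =>
    apply cong_of_entries (finCongr (size_appendAll C))
    intro i j
    exact absurd (i.isLt : (i : ℕ) < 0) (Nat.not_lt_zero _)
  | succ k ih =>
    obtain ⟨P, hU, hEq⟩ := hP 0
    have c0 : Cong (A 0) ((C 0).matWith (a 0) (mu 0)) := by
      refine ⟨P, (↑hU.unit⁻¹ : Matrix (Fin ((C 0).size)) (Fin ((C 0).size)) ℂ), ?_, ?_, hEq⟩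
      · exact hU.mul_val_inv
      · exact hU.val_inv_mul
    have ct := ih (fun i => C i.succ) (fun i => a i.succ) (fun i => mu i.succ)
      (fun i => A i.succ) (fun i => hP i.succ)
    exact cong_trans (cong_dsum c0 ct)
      (matWith_append (C 0) (appendAll fun i => C i.succ) (a 0) (bigA _ _) (mu 0) (bigMu _ _))

lemma cong_reindexCongr {m n : ℕ} (h : m = n) (M : Matrix (Fin m) (Fin m) ℂ) :
    Cong (Matrix.reindex (finCongr h) (finCongr h) M) M :=
  cong_of_entries (finCongr h).symm _ _ (fun _ _ => rfl)

lemma disj_pt {α β γ : Type*} {f : β → α} {g : γ → α} (h : Set.range f ∩ Set.range g = ∅) :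
    ∀ s u, f s ≠ g u := fun s u hh =>
  Set.eq_empty_iff_forall_notMem.mp h (f s) ⟨⟨s, rfl⟩, ⟨u, hh.symm⟩⟩

lemma part2 {q : ℕ} (C : Fin q → StarData)
    (A : (i : Fin q) → Matrix (Fin (C i).size) (Fin (C i).size) ℂ)
    (hdisj1 : ∀ i j, i ≠ j → (C i).SG2 ∩ (C j).SG2 = ∅)
    (hdisj2 : ∀ i j, i ≠ j → (C i).SG2 ∩ (C j).SG2neg = ∅)
    (hdisj3 : ∀ i j, i ≠ j → (C i).SH ∩ (C j).SH = ∅)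
    (a : (i : Fin q) → Fin (C i).n2 → ℂ) (mu : (i : Fin q) → Fin (C i).n3 → ℂ)
    (hOK : ∀ i, (C i).ParamsOK (a i) (mu i))
    (hP : ∀ i, ∃ P : Matrix (Fin (C i).size) (Fin (C i).size) ℂ,
      IsUnit P ∧ A i = P * (C i).matWith (a i) (mu i) * Pᴴ)
    (hr1 : ∀ i j, i ≠ j →
      Set.range (fun t => a i t ^ 2) ∩ Set.range (fun t => a j t ^ 2) = ∅)
    (hr2 : ∀ i j, i ≠ j →
      Set.range (fun t => a i t ^ 2) ∩ Set.range (fun t => -(a j t ^ 2)) = ∅)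
    (hr3 : ∀ i j, i ≠ j → Set.range (mu i) ∩ Set.range (mu j) = ∅) :
    Matrix.reindex (finCongr (size_appendAll C)) (finCongr (size_appendAll C))
      (finDsum (fun i => (C i).size) A) ∈ starBundle (appendAll C) := by
  refine mem_starBundle_of_cong
    (big_paramsOK C a mu hOK
      (fun i j hij => disj_pt (hr1 i j hij))
      (fun i j hij => disj_pt (hr2 i j hij))
      (fun i j hij => disj_pt (hr3 i j hij))
      (fun i j hij => disj_pt (hdisj1 i j hij))
      (fun i j hij => disj_pt (hdisj2 i j hij))
      (fun i j hij => disj_pt (hdisj3 i j hij))) ?_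
  exact cong_trans (cong_reindexCongr _ _) (big_cong C a mu A hP)

/-- `e^{ir}` for real `r`. -/
def eI (r : ℝ) : ℂ := Complex.exp (r * Complex.I)

lemma abs_eI (r : ℝ) : ‖eI r‖ = 1 := Complex.norm_exp_ofReal_mul_I r

lemma eI_ne_zero (r : ℝ) : eI r ≠ 0 := Complex.exp_ne_zero _

lemma eI_zero : eI 0 = 1 := by simp [eI]

lemma eI_inj {c δ t t' : ℝ} (hc : c ≠ 0) (hδ : δ * |c| ≤ Real.pi)
    (ht : t ∈ Set.Ioo (0 : ℝ) δ) (ht' : t' ∈ Set.Ioo (0 : ℝ) δ)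
    (h : eI (c * t) = eI (c * t')) : t = t' := by
  rw [eI, eI, Complex.exp_eq_exp_iff_exists_int] at h
  obtain ⟨n, hn⟩ := h
  have him : c * t = c * t' + n * (2 * Real.pi) := by
    have := congrArg Complex.im hn
    simpa using this
  have h1 : c * (t - t') = n * (2 * Real.pi) := by linear_combination him
  have hπ := Real.pi_pos
  by_cases hn0 : n = 0
  · subst hn0
    simp at h1
    rcases h1 with h1 | h1
    · exact absurd h1 hc
    · linarith
  · exfalso
    have habs : (1 : ℝ) ≤ |(n : ℝ)| := by
      rw [← Int.cast_abs]
      exact_mod_cast Int.one_le_abs hn0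
    have h2 : |c| * |t - t'| = |(n : ℝ)| * (2 * Real.pi) := by
      have := congrArg abs h1
      rwa [abs_mul, abs_mul, abs_of_pos (by linarith : (0:ℝ) < 2 * Real.pi)] at this
    have h3 : |t - t'| < δ := by
      rw [abs_sub_lt_iff]
      constructor <;> [linarith [ht.1, ht.2, ht'.1, ht'.2]; linarith [ht.1, ht.2, ht'.1, ht'.2]]
    have h4 : (0:ℝ) < |c| := abs_pos.mpr hc
    nlinarith [abs_nonneg (t - t')]

section Cont

variable {X : Type*} [TopologicalSpace X]

lemma continuous_entry {m n : ℕ} {f : X → Matrix (Fin m) (Fin n) ℂ} (hf : Continuous f)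
    (i : Fin m) (j : Fin n) : Continuous fun x => f x i j :=
  (continuous_apply j).comp ((continuous_apply i).comp hf)

lemma continuous_dsum {m n : ℕ} {f : X → Matrix (Fin m) (Fin m) ℂ}
    {g : X → Matrix (Fin n) (Fin n) ℂ} (hf : Continuous f) (hg : Continuous g) :
    Continuous fun x => dsum (f x) (g x) := by
  apply continuous_matrix
  intro i j
  simp only [dsum_apply]
  split_ifs
  · exact continuous_entry hf _ _
  · exact continuous_entry hg _ _
  · exact continuous_const

lemma continuous_finDsum {q : ℕ} (p : Fin q → ℕ)
    (M : X → (i : Fin q) → Matrix (Fin (p i)) (Fin (p i)) ℂ)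
    (hM : ∀ i, Continuous fun x => M x i) : Continuous fun x => finDsum p (M x) := by
  induction q with
  | zero => exact continuous_const
  | succ k ih =>
    exact continuous_dsum (hM 0) (ih (fun i => p i.succ) (fun x i => M x i.succ)
      (fun i => hM i.succ))

lemma continuous_Jblock (k : ℕ) : Continuous fun μ : ℂ => Jblock k μ := by
  apply continuous_matrix
  intro i j
  show Continuous fun μ : ℂ =>
    (if (j : ℕ) = (i : ℕ) then μ else if (j : ℕ) = (i : ℕ) + 1 then 1 else 0)
  split_ifs
  · exact continuous_id
  · exact continuous_const
  · exact continuous_const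

lemma continuous_Hblock (k : ℕ) : Continuous fun μ : ℂ => Hblock k μ := by
  apply continuous_matrix
  intro i j
  show Continuous fun μ : ℂ =>
    (Matrix.fromBlocks 0 1 (Jblock k μ) 0) (finSumFinEquiv.symm i) (finSumFinEquiv.symm j)
  rcases finSumFinEquiv.symm i with x | x <;> rcases finSumFinEquiv.symm j with y | y
  · exact continuous_const
  · exact continuous_const
  · exact continuous_entry (continuous_Jblock k) x y
  · exact continuous_const

lemma continuous_matWith (d : StarData) (aa : X → Fin d.n2 → ℂ) (mm : X → Fin d.n3 → ℂ)
    (ha : ∀ i, Continuous fun x => aa x i) (hm : ∀ i, Continuous fun x => mm x i) :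
    Continuous fun x => d.matWith (aa x) (mm x) := by
  apply continuous_dsum continuous_const
  apply continuous_dsum
  · exact continuous_finDsum _ _ fun i => (ha i).smul continuous_const
  · exact continuous_finDsum _ _ fun i => (continuous_Hblock (d.m i)).comp (hm i)

lemma continuous_reindexCongr {m n : ℕ} (h : m = n) {f : X → Matrix (Fin m) (Fin m) ℂ}
    (hf : Continuous f) :
    Continuous fun x => Matrix.reindex (finCongr h) (finCongr h) (f x) := by
  apply continuous_matrix
  intro i j
  exact continuous_entry hf _ _

lemma continuous_eI (c : ℝ) : Continuous fun t : ℝ => eI (c * t) := by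
  unfold eI
  fun_prop

end Cont

lemma eI_two (r : ℝ) : eI r ^ 2 = eI (2 * r) := by
  rw [eI, eI, sq, ← Complex.exp_add]
  congr 1
  push_cast
  ring

lemma pow_eI (r : ℝ) (x : ℂ) : (eI r * x) ^ 2 = eI (2 * r) * x ^ 2 := by
  rw [mul_pow, eI_two]

lemma pert_OK {d : StarData} {a : Fin d.n2 → ℂ} {mu : Fin d.n3 → ℂ}
    (h : d.ParamsOK a mu) (c : ℝ) :
    d.ParamsOK (fun s => eI c * a s) (fun s => eI c * mu s) := by
  obtain ⟨h1, h2, h3, h4, h5⟩ := h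
  have hu : eI (2 * c) ≠ 0 := eI_ne_zero _
  refine ⟨fun i => by rw [show ‖eI c * a i‖ = ‖eI c‖ * ‖a i‖ from norm_mul _ _, abs_eI, one_mul]; exact h1 i,
    fun i => by rw [show ‖eI c * mu i‖ = ‖eI c‖ * ‖mu i‖ from norm_mul _ _, abs_eI, one_mul]; exact h2 i, ?_, ?_, ?_⟩
  · intro i j hpar
    rw [pow_eI, pow_eI, Ne, mul_right_inj' hu]
    exact h3 i j hpar
  · intro i j hpar
    rw [pow_eI, pow_eI, ← mul_neg, Ne, mul_right_inj' hu]
    exact h4 i j hpar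
  · intro i j
    rw [Ne, mul_right_inj' (eI_ne_zero c)]
    exact h5 i j

lemma sub_violation {c1 c2 : ℝ} {X Y : ℂ} (hc : c1 ≠ c2) (hX : X ≠ 0) {δ : ℝ}
    (hδ : δ * |c1 - c2| ≤ Real.pi) :
    Set.Subsingleton {t | t ∈ Set.Ioo (0 : ℝ) δ ∧ eI (c1 * t) * X = eI (c2 * t) * Y} := by
  have key : ∀ {s : ℝ}, eI (c1 * s) * X = eI (c2 * s) * Y →
      eI ((c1 - c2) * s) = Y * X⁻¹ := by
    intro s hs
    have h2 : eI ((c1 - c2) * s) = eI (c1 * s) * (eI (c2 * s))⁻¹ := by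
      rw [eI, eI, eI, ← Complex.exp_neg, ← Complex.exp_add]
      congr 1
      push_cast
      ring
    have hb := eI_ne_zero (c2 * s)
    rw [h2]
    rw [eq_mul_inv_iff_mul_eq₀ hX, mul_right_comm, mul_inv_eq_iff_eq_mul₀ hb, hs, mul_comm]
  intro t ht t' ht'
  exact eI_inj (sub_ne_zero.mpr hc) hδ ht.1 ht'.1 ((key ht.2).trans (key ht'.2).symm)

lemma cast_ne {q : ℕ} {i j : Fin q} (h : i ≠ j) : ((i : ℕ) : ℝ) ≠ ((j : ℕ) : ℝ) := by
  intro hh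
  exact h (Fin.ext (by exact_mod_cast hh))

lemma abs_sub_le_of_bounds {x y B : ℝ} (hx : 0 ≤ x) (hx' : x ≤ B) (hy : 0 ≤ y) (hy' : y ≤ B) :
    |x - y| ≤ B := by
  rw [abs_le]
  constructor <;> linarith

lemma delta_bound {q : ℕ} {δ c : ℝ} (hδ : δ ≤ Real.pi / (2 * q + 1)) (hδ0 : 0 < δ)
    (hc : |c| ≤ 2 * q) : δ * |c| ≤ Real.pi := by
  have hπ := Real.pi_pos
  have h1 : (0 : ℝ) < 2 * q + 1 := by positivity
  have h2 : δ * |c| ≤ (Real.pi / (2 * q + 1)) * (2 * q) :=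
    mul_le_mul hδ hc (abs_nonneg c) (by positivity)
  rw [div_mul_eq_mul_div] at h2
  calc δ * |c| ≤ Real.pi * (2 * q) / (2 * q + 1) := h2
    _ ≤ Real.pi := by
        rw [div_le_iff₀ h1]
        nlinarith

lemma fin_cast_le {q : ℕ} (i : Fin q) : ((i : ℕ) : ℝ) ≤ (q : ℝ) := by
  have := i.isLt
  exact_mod_cast Nat.le_of_lt this

lemma ne_zero_of_abs_one {z : ℂ} (h : ‖z‖ = 1) : z ≠ 0 := fun h0 => by
  simp [h0] at h

lemma ne_zero_of_abs_gt {z : ℂ} (h : 1 < ‖z‖) : z ≠ 0 := fun h0 => by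
  simp [h0] at h
  linarith

lemma part1 {q : ℕ} (C : Fin q → StarData)
    (A : (i : Fin q) → Matrix (Fin (C i).size) (Fin (C i).size) ℂ)
    (hA : ∀ i, A i ∈ starBundle (C i))
    (hdisj1 : ∀ i j, i ≠ j → (C i).SG2 ∩ (C j).SG2 = ∅)
    (hdisj2 : ∀ i j, i ≠ j → (C i).SG2 ∩ (C j).SG2neg = ∅)
    (hdisj3 : ∀ i j, i ≠ j → (C i).SH ∩ (C j).SH = ∅) :
    Matrix.reindex (finCongr (size_appendAll C)) (finCongr (size_appendAll C))
      (finDsum (fun i => (C i).size) A) ∈ closure (starBundle (appendAll C)) := by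
  choose a mu P hU hOK hEq using hA
  set F : ℝ → Matrix (Fin ((appendAll C).size)) (Fin ((appendAll C).size)) ℂ := fun t =>
    Matrix.reindex (finCongr (size_appendAll C)) (finCongr (size_appendAll C))
      (finDsum (fun i => (C i).size) (fun i =>
        P i * (C i).matWith (fun s => eI (((i : ℕ) : ℝ) * t) * a i s)
          (fun s => eI (((i : ℕ) : ℝ) * t) * mu i s) * (P i)ᴴ)) with hFdef
  have hF0 : F 0 = Matrix.reindex (finCongr (size_appendAll C)) (finCongr (size_appendAll C))
      (finDsum (fun i => (C i).size) A) := by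
    have hfam : (fun i =>
        P i * (C i).matWith (fun s => eI (((i : ℕ) : ℝ) * 0) * a i s)
          (fun s => eI (((i : ℕ) : ℝ) * 0) * mu i s) * (P i)ᴴ) = A := by
      funext i
      have ha0 : (fun s => eI (((i : ℕ) : ℝ) * 0) * a i s) = a i := by
        funext s
        rw [mul_zero, eI_zero, one_mul]
      have hm0 : (fun s => eI (((i : ℕ) : ℝ) * 0) * mu i s) = mu i := by
        funext s
        rw [mul_zero, eI_zero, one_mul]
      rw [ha0, hm0, ← hEq i]
    simp only [hFdef]
    rw [hfam]
  have hcont : Continuous F := by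
    apply continuous_reindexCongr
    apply continuous_finDsum
    intro i
    refine Continuous.matrix_mul (Continuous.matrix_mul continuous_const ?_) continuous_const
    exact continuous_matWith (C i) _ _
      (fun s => (continuous_eI _).mul continuous_const)
      (fun s => (continuous_eI _).mul continuous_const)
  rw [← hF0, mem_closure_iff_nhds]
  intro U hUn
  have hpre : F ⁻¹' U ∈ nhds (0 : ℝ) := hcont.continuousAt.preimage_mem_nhds hUn
  obtain ⟨ε, hε, hball⟩ := Metric.mem_nhds_iff.mp hpre
  set δ : ℝ := min ε (Real.pi / (2 * q + 1)) with hδdef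
  have hδ0 : 0 < δ := lt_min hε (by positivity)
  have hδπ : δ ≤ Real.pi / (2 * q + 1) := min_le_right _ _
  classical
  let ι := (i : Fin q) × (j : Fin q) ×
    ((Fin (C i).n2 × Fin (C j).n2) ⊕ (Fin (C i).n2 × Fin (C j).n2)
      ⊕ (Fin (C i).n3 × Fin (C j).n3))
  let V : ι → Set ℝ := fun x =>
    match x with
    | ⟨i, j, Sum.inl (s, u)⟩ => {t | (t ∈ Set.Ioo (0 : ℝ) δ ∧ i ≠ j) ∧
        eI (2 * (((i : ℕ) : ℝ) * t)) * a i s ^ 2 = eI (2 * (((j : ℕ) : ℝ) * t)) * a j u ^ 2}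
    | ⟨i, j, Sum.inr (Sum.inl (s, u))⟩ => {t | (t ∈ Set.Ioo (0 : ℝ) δ ∧ i ≠ j) ∧
        eI (2 * (((i : ℕ) : ℝ) * t)) * a i s ^ 2
          = eI (2 * (((j : ℕ) : ℝ) * t)) * (-(a j u ^ 2))}
    | ⟨i, j, Sum.inr (Sum.inr (s, u))⟩ => {t | (t ∈ Set.Ioo (0 : ℝ) δ ∧ i ≠ j) ∧
        eI (((i : ℕ) : ℝ) * t) * mu i s = eI (((j : ℕ) : ℝ) * t) * mu j u}
  have hVfin : ∀ x, (V x).Finite := by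
    rintro ⟨i, j, (⟨s, u⟩ | ⟨s, u⟩ | ⟨s, u⟩)⟩ <;> by_cases hij : i = j
    · apply Set.Subsingleton.finite
      intro t ht t' ht'
      obtain ⟨⟨_, hne⟩, _⟩ := ht
      exact (hne hij).elim
    · refine Set.Subsingleton.finite (Set.Subsingleton.anti
        (sub_violation (c1 := 2 * ((i : ℕ) : ℝ)) (c2 := 2 * ((j : ℕ) : ℝ)) (X := a i s ^ 2) (Y := a j u ^ 2)
          (by intro hh; exact cast_ne hij (mul_left_cancel₀ two_ne_zero hh))
          (pow_ne_zero 2 (ne_zero_of_abs_one ((hOK i).1 s)))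
          (delta_bound hδπ hδ0 (by
            exact abs_sub_le_of_bounds (by positivity) (by nlinarith [fin_cast_le i])
              (by positivity) (by nlinarith [fin_cast_le j])))) ?_)
      intro t ht
      obtain ⟨⟨hI, hne⟩, heq⟩ := ht
      exact ⟨hI, by rw [mul_assoc, mul_assoc]; exact heq⟩
    · apply Set.Subsingleton.finite
      intro t ht t' ht'
      obtain ⟨⟨_, hne⟩, _⟩ := ht
      exact (hne hij).elim
    · refine Set.Subsingleton.finite (Set.Subsingleton.anti
        (sub_violation (c1 := 2 * ((i : ℕ) : ℝ)) (c2 := 2 * ((j : ℕ) : ℝ)) (X := a i s ^ 2) (Y := -(a j u ^ 2))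
          (by intro hh; exact cast_ne hij (mul_left_cancel₀ two_ne_zero hh))
          (pow_ne_zero 2 (ne_zero_of_abs_one ((hOK i).1 s)))
          (delta_bound hδπ hδ0
            (abs_sub_le_of_bounds (by positivity) (by nlinarith [fin_cast_le i])
              (by positivity) (by nlinarith [fin_cast_le j])))) ?_)
      intro t ht
      obtain ⟨⟨hI, hne⟩, heq⟩ := ht
      exact ⟨hI, by rw [mul_assoc, mul_assoc]; exact heq⟩
    · apply Set.Subsingleton.finite
      intro t ht t' ht'
      obtain ⟨⟨_, hne⟩, _⟩ := ht
      exact (hne hij).elim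
    · refine Set.Subsingleton.finite (Set.Subsingleton.anti
        (sub_violation (c1 := ((i : ℕ) : ℝ)) (c2 := ((j : ℕ) : ℝ)) (X := mu i s) (Y := mu j u)
          (cast_ne hij)
          (ne_zero_of_abs_gt ((hOK i).2.1 s))
          (delta_bound hδπ hδ0
            (abs_sub_le_of_bounds (by positivity) (by nlinarith [fin_cast_le i])
              (by positivity) (by nlinarith [fin_cast_le j])))) ?_)
      intro t ht
      obtain ⟨⟨hI, hne⟩, heq⟩ := ht
      exact ⟨hI, heq⟩
  have hfin : (⋃ x, V x).Finite := Set.finite_iUnion hVfin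
  have hinf : (Set.Ioo (0 : ℝ) δ).Infinite := Set.infinite_coe_iff.mp (Set.Ioo.infinite hδ0)
  obtain ⟨t, htI, htV⟩ := (hinf.diff hfin).nonempty
  have htg1 : ∀ i j : Fin q, i ≠ j → ∀ s u,
      eI (2 * (((i : ℕ) : ℝ) * t)) * a i s ^ 2
        ≠ eI (2 * (((j : ℕ) : ℝ) * t)) * a j u ^ 2 := by
    intro i j hij s u heq
    refine htV (Set.mem_iUnion.mpr ⟨⟨i, j, Sum.inl (s, u)⟩, ?_⟩)
    exact ⟨⟨htI, hij⟩, heq⟩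
  have htg2 : ∀ i j : Fin q, i ≠ j → ∀ s u,
      eI (2 * (((i : ℕ) : ℝ) * t)) * a i s ^ 2
        ≠ eI (2 * (((j : ℕ) : ℝ) * t)) * (-(a j u ^ 2)) := by
    intro i j hij s u heq
    refine htV (Set.mem_iUnion.mpr ⟨⟨i, j, Sum.inr (Sum.inl (s, u))⟩, ?_⟩)
    exact ⟨⟨htI, hij⟩, heq⟩
  have htg3 : ∀ i j : Fin q, i ≠ j → ∀ s u,
      eI (((i : ℕ) : ℝ) * t) * mu i s ≠ eI (((j : ℕ) : ℝ) * t) * mu j u :=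
    fun i j hij s u heq =>
    htV (Set.mem_iUnion.mpr ⟨⟨i, j, Sum.inr (Sum.inr (s, u))⟩, ⟨⟨htI, hij⟩, heq⟩⟩)
  refine ⟨F t, hball ?_, ?_⟩
  · simp only [Metric.mem_ball, Real.dist_eq, sub_zero]
    rw [abs_of_pos htI.1]
    exact lt_of_lt_of_le htI.2 (min_le_left _ _)
  · simp only [hFdef]
    refine part2 C _ hdisj1 hdisj2 hdisj3
      (fun i => fun s => eI (((i : ℕ) : ℝ) * t) * a i s)
      (fun i => fun s => eI (((i : ℕ) : ℝ) * t) * mu i s)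
      (fun i => pert_OK (hOK i) _)
      (fun i => ⟨P i, hU i, rfl⟩) ?_ ?_ ?_
    · intro i j hij
      rw [Set.eq_empty_iff_forall_notMem]
      rintro x ⟨⟨s, hs⟩, ⟨u, hu⟩⟩
      apply htg1 i j hij s u
      rw [← pow_eI, ← pow_eI]
      exact hs.trans hu.symm
    · intro i j hij
      rw [Set.eq_empty_iff_forall_notMem]
      rintro x ⟨⟨s, hs⟩, ⟨u, hu⟩⟩
      apply htg2 i j hij s u
      rw [mul_neg, ← pow_eI, ← pow_eI]
      exact hs.trans hu.symm
    · intro i j hij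
      rw [Set.eq_empty_iff_forall_notMem]
      rintro x ⟨⟨s, hs⟩, ⟨u, hu⟩⟩
      exact htg3 i j hij s u (hs.trans hu.symm)
/-- **Lemma 3.4.**  If `A_i ∈ ℬ*(C_i)` and the parameter sets of the `C_i` satisfy the
disjointness conditions, then `A_1 ⊕ ⋯ ⊕ A_q` belongs to the closure of
`ℬ*(C_1 ⊕ ⋯ ⊕ C_q)`; moreover, if the `A_i` are given by canonical matrices whose
parameters also satisfy the disjointness conditions, then
`A_1 ⊕ ⋯ ⊕ A_q ∈ ℬ*(C_1 ⊕ ⋯ ⊕ C_q)`. -/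
theorem dsum_mem_closure_starBundle_of_mem (q : ℕ) (C : Fin q → StarData)
    (hC : ∀ i, (C i).Valid)
    (A : (i : Fin q) → Matrix (Fin (C i).size) (Fin (C i).size) ℂ)
    (hA : ∀ i, A i ∈ starBundle (C i))
    (hdisj1 : ∀ i j, i ≠ j → (C i).SG2 ∩ (C j).SG2 = ∅)
    (hdisj2 : ∀ i j, i ≠ j → (C i).SG2 ∩ (C j).SG2neg = ∅)
    (hdisj3 : ∀ i j, i ≠ j → (C i).SH ∩ (C j).SH = ∅) :
    (∃ hsz : finSize (fun i => (C i).size) = (appendAll C).size,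
      Matrix.reindex (finCongr hsz) (finCongr hsz) (finDsum (fun i => (C i).size) A) ∈
        closure (starBundle (appendAll C))) ∧
    ∀ (a : (i : Fin q) → Fin (C i).n2 → ℂ) (mu : (i : Fin q) → Fin (C i).n3 → ℂ),
      (∀ i, (C i).ParamsOK (a i) (mu i)) →
      (∀ i, ∃ P : Matrix (Fin (C i).size) (Fin (C i).size) ℂ,
        IsUnit P ∧ A i = P * (C i).matWith (a i) (mu i) * Pᴴ) →
      (∀ i j, i ≠ j →
        Set.range (fun t => a i t ^ 2) ∩ Set.range (fun t => a j t ^ 2) = ∅) →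
      (∀ i j, i ≠ j →
        Set.range (fun t => a i t ^ 2) ∩ Set.range (fun t => -(a j t ^ 2)) = ∅) →
      (∀ i j, i ≠ j → Set.range (mu i) ∩ Set.range (mu j) = ∅) →
      ∃ hsz : finSize (fun i => (C i).size) = (appendAll C).size,
        Matrix.reindex (finCongr hsz) (finCongr hsz) (finDsum (fun i => (C i).size) A) ∈
          starBundle (appendAll C) := by
  refine ⟨⟨size_appendAll C, part1 C A hA hdisj1 hdisj2 hdisj3⟩, ?_⟩
  intro a mu hOK hP hr1 hr2 hr3
  exact ⟨size_appendAll C, part2 C A hdisj1 hdisj2 hdisj3 a mu hOK hP hr1 hr2 hr3⟩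
end
end

section
/- (Lemma 3.8(i), congruence case.) Let k > 1. If k is even, then Γ_k belongs to the closure of the set { P (H_2(μ̃_1) ⊕ ⋯ ⊕ H_2(μ̃_{k/2})) Pᵀ : P ∈ ℂ^{k×k} invertible, each μ̃_i satisfies |μ̃_i| > 1 or μ̃_i = e^{iθ} with 0 < θ < π, and μ̃_i ≠ μ̃_{i'} for i ≠ i' }. If k is odd, then Γ_k belongs to the closure of the set { P (H_2(μ̃_1) ⊕ ⋯ ⊕ H_2(μ̃_{⌊k/2⌋}) ⊕ [1]) Pᵀ : P ∈ ℂ^{k×k} invertible, each μ̃_i satisfies |μ̃_i| > 1 or μ̃_i = e^{iθ} with 0 < θ < π, and μ̃_i ≠ μ̃_{i'} for i ≠ i' }. -/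
open Matrix

noncomputable section

/-- The `2 × 2` block `H_2(μ) = [[0, 1], [μ, 0]]`. -/
def H2 (μ : ℂ) : Matrix (Fin 2) (Fin 2) ℂ := !![0, 1; μ, 0]

/-- The block-diagonal direct sum `H_2(μ_1) ⊕ ⋯ ⊕ H_2(μ_r)`. -/
def pairH (r : ℕ) (mu : Fin r → ℂ) :
    Matrix (Fin (finSize fun _ : Fin r => 2)) (Fin (finSize fun _ : Fin r => 2)) ℂ :=
  finDsum (fun _ => 2) fun i => H2 (mu i)

/-- A complex number `μ` is a valid Type II-(a) parameter when `|μ| > 1` or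
`μ = e^(iθ)` with `0 < θ < π`. -/
def TypeIIaParam (μ : ℂ) : Prop :=
  1 < ‖μ‖ ∨ ∃ θ : ℝ, 0 < θ ∧ θ < Real.pi ∧ μ = Complex.exp ((θ : ℂ) * Complex.I)


namespace L38


def Amat (k : ℕ) (c : ℕ → ℂ) : Matrix (Fin k) (Fin k) ℂ :=
  Matrix.of fun i j =>
    if (i : ℕ) + (j : ℕ) = k - 1 then (-1 : ℂ) ^ (k - 1 - (i : ℕ)) * c i
    else if (i : ℕ) + (j : ℕ) = k then (-1 : ℂ) ^ (k - 1 - (i : ℕ)) else 0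

lemma Amat_anti {k : ℕ} (c : ℕ → ℂ) (i j : Fin k) (h : (i:ℕ) + (j:ℕ) = k - 1) :
    Amat k c i j = (-1 : ℂ) ^ (k - 1 - (i:ℕ)) * c i := by simp [Amat, h]

lemma Amat_sub {k : ℕ} (c : ℕ → ℂ) (i j : Fin k) (h1 : (i:ℕ) + (j:ℕ) ≠ k - 1)
    (h2 : (i:ℕ) + (j:ℕ) = k) : Amat k c i j = (-1 : ℂ) ^ (k - 1 - (i:ℕ)) := by
  simp only [Amat, Matrix.of_apply, if_neg h1, if_pos h2]

lemma Amat_zero {k : ℕ} (c : ℕ → ℂ) (i j : Fin k) (h1 : (i:ℕ) + (j:ℕ) ≠ k - 1)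
    (h2 : (i:ℕ) + (j:ℕ) ≠ k) : Amat k c i j = 0 := by simp [Amat, h1, h2]

def dcoef (k : ℕ) (c : ℕ → ℂ) (lam : ℂ) (i : ℕ) : ℂ :=
  (-1 : ℂ) ^ (k - 1 - i) * c i - lam * ((-1 : ℂ) ^ i * c (k - 1 - i))

def fcoef (k : ℕ) (lam : ℂ) (i : ℕ) : ℂ :=
  (-1 : ℂ) ^ (k - 1 - i) - lam * (-1 : ℂ) ^ (i - 1)

def wvec (d f : ℕ → ℂ) (i0 : ℕ) : ℕ → ℂ
  | 0 => if i0 = 0 then 1 else 0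
  | i + 1 =>
      if i + 1 < i0 then 0
      else if i + 1 = i0 then 1
      else -(f (i + 1) / d (i + 1)) * wvec d f i0 i

lemma wvec_lt (d f : ℕ → ℂ) (i0 i : ℕ) (h : i < i0) : wvec d f i0 i = 0 := by
  cases i with
  | zero => rw [wvec, if_neg (by omega)]
  | succ n => rw [wvec, if_pos h]

lemma wvec_self (d f : ℕ → ℂ) (i0 : ℕ) : wvec d f i0 i0 = 1 := by
  cases i0 with
  | zero => rw [wvec, if_pos rfl]
  | succ n => rw [wvec, if_neg (by omega), if_pos rfl]

lemma wvec_gt (d f : ℕ → ℂ) (i0 i : ℕ) (h : i0 < i + 1) :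
    wvec d f i0 (i + 1) = -(f (i + 1) / d (i + 1)) * wvec d f i0 i := by
  rw [wvec, if_neg (by omega), if_neg (by omega)]

lemma wvec_key (d f : ℕ → ℂ) (i0 : ℕ) (hd0 : d i0 = 0) (i : ℕ)
    (hdi : i ≠ i0 → d i ≠ 0) :
    d i * wvec d f i0 i + (if 1 ≤ i then f i * wvec d f i0 (i - 1) else 0) = 0 := by
  rcases lt_trichotomy i i0 with h | h | h
  · rw [wvec_lt d f i0 i h]
    rcases Nat.eq_zero_or_pos i with h0 | h0
    · rw [if_neg (by omega)]; ring
    · rw [if_pos (by omega), wvec_lt d f i0 (i-1) (by omega)]; ring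
  · subst h
    rw [hd0]
    rcases Nat.eq_zero_or_pos i with h0 | h0
    · rw [if_neg (by omega)]; ring
    · rw [if_pos (by omega), wvec_lt d f i (i-1) (by omega)]; ring
  · obtain ⟨n, rfl⟩ : ∃ n, i = n + 1 := ⟨i - 1, by omega⟩
    rw [wvec_gt d f i0 n h, if_pos (by omega)]
    have hdn : d (n + 1) ≠ 0 := hdi (by omega)
    simp only [Nat.add_sub_cancel]
    field_simp
    ring

lemma sum_two {n : ℕ} (g : Fin n → ℂ) (a b : Fin n) (hab : a ≠ b)
    (h : ∀ j, j ≠ a → j ≠ b → g j = 0) : ∑ j, g j = g a + g b := by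
  classical
  have h1 : ∑ j, g j = ∑ j ∈ ({a, b} : Finset (Fin n)), g j := by
    refine (Finset.sum_subset (Finset.subset_univ _) ?_).symm
    intro x _ hx
    simp only [Finset.mem_insert, Finset.mem_singleton] at hx
    push_neg at hx
    exact h x hx.1 hx.2
  rw [h1, Finset.sum_pair hab]

lemma exists_eigenvector (k : ℕ) (hk : 0 < k) (c : ℕ → ℂ) (lam : ℂ) (i0 : Fin k)
    (hd0 : dcoef k c lam i0 = 0)
    (hd : ∀ j : Fin k, j ≠ i0 → dcoef k c lam (j : ℕ) ≠ 0) :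
    ∃ v : Fin k → ℂ, v ≠ 0 ∧ (Amat k c) *ᵥ v = lam • ((Amat k c)ᵀ *ᵥ v) := by
  set d := dcoef k c lam with hdd
  set f := fcoef k lam with hff
  set w := wvec d f i0 with hw
  set v : Fin k → ℂ := fun j => w (k - 1 - (j : ℕ)) with hv
  have hi0 : (i0 : ℕ) ≤ k - 1 := by have := i0.isLt; omega
  refine ⟨v, ?_, ?_⟩
  · intro h0
    have h1 : v ⟨k - 1 - (i0 : ℕ), by omega⟩ = 0 := by rw [h0]; rfl
    have h2 : v ⟨k - 1 - (i0 : ℕ), by omega⟩ = w (i0 : ℕ) := by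
      show w (k - 1 - (k - 1 - (i0 : ℕ))) = w (i0 : ℕ); congr 1; omega
    rw [h2, hw, wvec_self] at h1
    exact one_ne_zero h1
  · have rowsum : ∀ i : Fin k, ∑ j, (Amat k c i j - lam * Amat k c j i) * v j
        = d (i : ℕ) * w (i : ℕ) + (if 1 ≤ (i : ℕ) then f (i : ℕ) * w ((i : ℕ) - 1) else 0) := by
      intro i
      have hik : (i : ℕ) ≤ k - 1 := by have := i.isLt; omega
      rcases Nat.eq_zero_or_pos (i : ℕ) with h0 | h0
      · rw [Finset.sum_eq_single (⟨k - 1, by omega⟩ : Fin k)]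
        · have e1 : Amat k c i ⟨k-1, by omega⟩ = (-1:ℂ)^(k-1-(i:ℕ)) * c (i:ℕ) :=
            Amat_anti c _ _ (by simp only [Fin.val_mk]; omega)
          have e2 : Amat k c ⟨k-1, by omega⟩ i = (-1:ℂ)^(k-1-(k-1)) * c (k-1) :=
            Amat_anti c _ _ (by simp only [Fin.val_mk]; omega)
          have v1 : v ⟨k-1, by omega⟩ = w 0 := by
            show w (k - 1 - (k-1)) = w 0; congr 1; omega
          rw [e1, e2, v1, if_neg (by omega), hdd, dcoef, h0]
          rw [(by omega : k - 1 - (k-1) = 0), (by omega : k - 1 - 0 = k - 1)]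
          ring
        · intro j _ hj
          have hj1 : (i : ℕ) + (j : ℕ) ≠ k - 1 := by
            intro hc; apply hj; apply Fin.ext; simp only [Fin.val_mk]; omega
          have hj2 : (i : ℕ) + (j : ℕ) ≠ k := by have := j.isLt; omega
          rw [Amat_zero c i j hj1 hj2, Amat_zero c j i (by omega) (by omega)]
          ring
        · simp
      · rw [sum_two _ ⟨k - 1 - (i:ℕ), by omega⟩ ⟨k - (i:ℕ), by omega⟩ (by
            simp only [ne_eq, Fin.mk.injEq]; omega)]
        · have e1 : Amat k c i ⟨k-1-(i:ℕ), by omega⟩ = (-1:ℂ)^(k-1-(i:ℕ)) * c (i:ℕ) :=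
            Amat_anti c _ _ (by simp only [Fin.val_mk]; omega)
          have e2 : Amat k c ⟨k-1-(i:ℕ), by omega⟩ i
              = (-1:ℂ)^(k-1-(k-1-(i:ℕ))) * c (k-1-(i:ℕ)) :=
            Amat_anti c _ _ (by simp only [Fin.val_mk]; omega)
          rw [(by omega : k-1-(k-1-(i:ℕ)) = (i:ℕ))] at e2
          have e3 : Amat k c i ⟨k-(i:ℕ), by omega⟩ = (-1:ℂ)^(k-1-(i:ℕ)) :=
            Amat_sub c _ _ (by simp only [Fin.val_mk]; omega) (by simp only [Fin.val_mk]; omega)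
          have e4 : Amat k c ⟨k-(i:ℕ), by omega⟩ i = (-1:ℂ)^(k-1-(k-(i:ℕ))) :=
            Amat_sub c _ _ (by simp only [Fin.val_mk]; omega) (by simp only [Fin.val_mk]; omega)
          rw [(by omega : k-1-(k-(i:ℕ)) = (i:ℕ) - 1)] at e4
          have v1 : v ⟨k-1-(i:ℕ), by omega⟩ = w (i : ℕ) := by
            show w (k - 1 - (k-1-(i:ℕ))) = w (i:ℕ); congr 1; omega
          have v2 : v ⟨k-(i:ℕ), by omega⟩ = w ((i : ℕ) - 1) := by
            show w (k - 1 - (k-(i:ℕ))) = w ((i:ℕ) - 1); congr 1; omega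
          rw [e1, e2, e3, e4, v1, v2, if_pos (by omega), hdd, hff, dcoef, fcoef]
        · intro j hj1 hj2
          have hj1' : (i : ℕ) + (j : ℕ) ≠ k - 1 := by
            intro hc; apply hj1; apply Fin.ext; simp only [Fin.val_mk]; omega
          have hj2' : (i : ℕ) + (j : ℕ) ≠ k := by
            intro hc; apply hj2; apply Fin.ext; simp only [Fin.val_mk]; omega
          rw [Amat_zero c i j hj1' hj2', Amat_zero c j i (by omega) (by omega)]
          ring
    ext i
    have expand : (Amat k c *ᵥ v) i - lam * (((Amat k c)ᵀ *ᵥ v) i)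
        = ∑ j, (Amat k c i j - lam * Amat k c j i) * v j := by
      simp only [mulVec, dotProduct, transpose_apply]
      rw [Finset.mul_sum, ← Finset.sum_sub_distrib]
      exact Finset.sum_congr rfl (fun j _ => by ring)
    have h1 : (Amat k c *ᵥ v) i - lam * (((Amat k c)ᵀ *ᵥ v) i) = 0 := by
      rw [expand, rowsum i]
      exact wvec_key d f i0 (by rwa [hdd]) (i : ℕ) (fun hne => hd i (by
        intro hc; apply hne; rw [hc]))
    have h2 : (lam • ((Amat k c)ᵀ *ᵥ v)) i = lam * (((Amat k c)ᵀ *ᵥ v) i) := rfl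
    rw [h2]
    linear_combination h1



variable {n : ℕ}

def Gram (A : Matrix (Fin n) (Fin n) ℂ) (v : Fin n → Fin n → ℂ) :
    Matrix (Fin n) (Fin n) ℂ :=
  Matrix.of fun x y => v x ⬝ᵥ (A *ᵥ v y)

lemma gram_swap (A : Matrix (Fin n) (Fin n) ℂ) (ν : Fin n → ℂ) (v : Fin n → Fin n → ℂ)
    (hv : ∀ x, A *ᵥ v x = ν x • (Aᵀ *ᵥ v x)) (x y : Fin n) :
    Gram A v x y = ν y * Gram A v y x := by
  show v x ⬝ᵥ (A *ᵥ v y) = ν y * (v y ⬝ᵥ (A *ᵥ v x))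
  rw [hv y, dotProduct_smul, smul_eq_mul]
  congr 1
  rw [dotProduct_mulVec, vecMul_transpose, dotProduct_comm]

lemma gram_eq_zero (A : Matrix (Fin n) (Fin n) ℂ) (ν : Fin n → ℂ) (v : Fin n → Fin n → ℂ)
    (hv : ∀ x, A *ᵥ v x = ν x • (Aᵀ *ᵥ v x)) (x y : Fin n) (h : ν x * ν y ≠ 1) :
    Gram A v x y = 0 := by
  have h1 := gram_swap A ν v hv x y
  have h2 := gram_swap A ν v hv y x
  rw [h2] at h1
  have h3 : (1 - ν x * ν y) * Gram A v x y = 0 := by linear_combination h1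
  rcases mul_eq_zero.mp h3 with h4 | h4
  · exact absurd (by linear_combination -h4) h
  · exact h4

def Qmat (v : Fin n → Fin n → ℂ) : Matrix (Fin n) (Fin n) ℂ :=
  Matrix.of fun a x => v x a

lemma gram_eq (A : Matrix (Fin n) (Fin n) ℂ) (v : Fin n → Fin n → ℂ) :
    Gram A v = (Qmat v)ᵀ * A * Qmat v := by
  ext x y
  show v x ⬝ᵥ (A *ᵥ v y) = ((Qmat v)ᵀ * A * Qmat v) x y
  simp only [Matrix.mul_apply, dotProduct, mulVec, transpose_apply, Qmat, Matrix.of_apply,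
    dotProduct, Finset.sum_mul, Finset.mul_sum]
  rw [Finset.sum_comm]
  exact Finset.sum_congr rfl fun a _ => Finset.sum_congr rfl fun b _ => by ring

lemma isUnit_Qmat (A : Matrix (Fin n) (Fin n) ℂ) (hA : IsUnit A.det) (ν : Fin n → ℂ)
    (hinj : Function.Injective ν) (v : Fin n → Fin n → ℂ) (hv0 : ∀ x, v x ≠ 0)
    (hv : ∀ x, A *ᵥ v x = ν x • (Aᵀ *ᵥ v x)) : IsUnit (Qmat v).det := by
  have hAT : IsUnit (Aᵀ).det := by rwa [det_transpose]
  set C : Matrix (Fin n) (Fin n) ℂ := (Aᵀ)⁻¹ * A with hC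
  have heig : ∀ x, (Matrix.toLin' C) (v x) = ν x • v x := by
    intro x
    rw [Matrix.toLin'_apply, hC, ← mulVec_mulVec, hv x, mulVec_smul, mulVec_mulVec,
      nonsing_inv_mul _ hAT, one_mulVec]
  have hli : LinearIndependent ℂ v := by
    apply Module.End.eigenvectors_linearIndependent' (Matrix.toLin' C) ν hinj v
    intro x
    rw [Module.End.hasEigenvector_iff]
    exact ⟨Module.End.mem_eigenspace_iff.mpr (heig x), hv0 x⟩
  rw [isUnit_iff_ne_zero]
  intro hdet
  obtain ⟨g, hg0, hg⟩ := (Matrix.exists_mulVec_eq_zero_iff).mpr hdet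
  have hsum : ∑ x, g x • v x = 0 := by
    funext a
    have : (Qmat v *ᵥ g) a = 0 := by rw [hg]; rfl
    simpa [Qmat, mulVec, dotProduct, Finset.sum_apply, mul_comm] using this
  have := Fintype.linearIndependent_iff.mp hli g hsum
  exact hg0 (funext fun x => this x)

def Rmodel (n : ℕ) (muext : ℕ → ℂ) : Matrix (Fin n) (Fin n) ℂ :=
  Matrix.of fun x y =>
    if (y : ℕ) = (x : ℕ) + 1 ∧ (x : ℕ) % 2 = 0 then 1
    else if (x : ℕ) = (y : ℕ) + 1 ∧ (y : ℕ) % 2 = 0 then muext ((y : ℕ) / 2) else 0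

lemma assemble_even (hn : n % 2 = 0) (A : Matrix (Fin n) (Fin n) ℂ)
    (hA : IsUnit A.det) (muext : ℕ → ℂ) (ν : Fin n → ℂ)
    (hνdef : ∀ x : Fin n,
      ν x = if (x : ℕ) % 2 = 0 then muext ((x : ℕ) / 2) else (muext ((x : ℕ) / 2))⁻¹)
    (hmu0 : ∀ j, 2 * j < n → muext j ≠ 0)
    (hinj : Function.Injective ν)
    (v : Fin n → Fin n → ℂ) (hv0 : ∀ x, v x ≠ 0)
    (hv : ∀ x, A *ᵥ v x = ν x • (Aᵀ *ᵥ v x)) :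
    ∃ P : Matrix (Fin n) (Fin n) ℂ, IsUnit P ∧ A = P * Rmodel n muext * Pᵀ := by
  classical
  set pair : Fin n → Fin n := fun x =>
    if h : (x : ℕ) % 2 = 0 then ⟨(x : ℕ) + 1, by have := x.isLt; omega⟩
    else ⟨(x : ℕ) - 1, by have := x.isLt; omega⟩ with hpairdef
  have hpairval : ∀ x : Fin n, (pair x : ℕ) = if (x : ℕ) % 2 = 0 then (x : ℕ) + 1
      else (x : ℕ) - 1 := by
    intro x
    rw [hpairdef]
    by_cases h : (x : ℕ) % 2 = 0 <;> simp [h]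
  have hpair : ∀ x, ν x * ν (pair x) = 1 := by
    intro x
    have hx := x.isLt
    rw [hνdef, hνdef]
    by_cases h : (x : ℕ) % 2 = 0
    · have h1 : (pair x : ℕ) = (x : ℕ) + 1 := by rw [hpairval, if_pos h]
      rw [if_pos h, h1, if_neg (by omega), (by omega : ((x:ℕ)+1)/2 = (x:ℕ)/2)]
      exact mul_inv_cancel₀ (hmu0 _ (by omega))
    · have h1 : (pair x : ℕ) = (x : ℕ) - 1 := by rw [hpairval, if_neg h]
      rw [if_neg h, h1, if_pos (by omega), (by omega : ((x:ℕ)-1)/2 = (x:ℕ)/2)]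
      exact inv_mul_cancel₀ (hmu0 _ (by omega))
  have hν0 : ∀ x, ν x ≠ 0 := by
    intro x h
    have := hpair x
    rw [h, zero_mul] at this
    exact zero_ne_one this
  have hone : ∀ x y, ν x * ν y = 1 → y = pair x := by
    intro x y h
    apply hinj
    have h1 := hpair x
    have := hν0 x
    apply mul_left_cancel₀ this
    rw [h, h1]
  set G := Gram A v with hG
  have hGunit : IsUnit G.det := by
    rw [hG, gram_eq, det_mul, det_mul, det_transpose]
    exact ((isUnit_Qmat A hA ν hinj v hv0 hv).mul hA).mul (isUnit_Qmat A hA ν hinj v hv0 hv)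
  have hGzero : ∀ x y, y ≠ pair x → G x y = 0 := by
    intro x y hy
    exact gram_eq_zero A ν v hv x y (fun hc => hy (hone x y hc))
  have ha : ∀ x, G x (pair x) ≠ 0 := by
    intro x h
    have : ∀ y, G x y = 0 := by
      intro y
      by_cases hy : y = pair x
      · rwa [hy]
      · exact hGzero x y hy
    exact (isUnit_iff_ne_zero.mp hGunit) (det_eq_zero_of_row_eq_zero x this)
  set δ : Fin n → ℂ := fun x => if (x : ℕ) % 2 = 0 then G x (pair x) else 1 with hδ
  have hδ0 : ∀ x, δ x ≠ 0 := by
    intro x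
    by_cases h : (x : ℕ) % 2 = 0
    · simpa [hδ, h] using ha x
    · simp [hδ, h]
  have key : G = diagonal δ * Rmodel n muext * diagonal δ := by
    ext x y
    rw [Matrix.mul_diagonal, Matrix.diagonal_mul]
    by_cases hb1 : (y : ℕ) = (x : ℕ) + 1 ∧ (x : ℕ) % 2 = 0
    · have hyp : y = pair x := by
        apply Fin.ext
        rw [hpairval, if_pos hb1.2, hb1.1]
      have hyodd : ¬ ((y : ℕ) % 2 = 0) := by
        have := hb1.1; have := hb1.2; omega
      have hR : Rmodel n muext x y = 1 := by
        simp only [Rmodel, Matrix.of_apply, if_pos hb1]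
      have hδx : δ x = G x (pair x) := by simp [hδ, hb1.2]
      have hδy : δ y = 1 := by simp [hδ, hyodd]
      rw [hR, hδx, hδy, hyp, mul_one, mul_one]
    · by_cases hb2 : (x : ℕ) = (y : ℕ) + 1 ∧ (y : ℕ) % 2 = 0
      · have hyp : x = pair y := by
          apply Fin.ext
          rw [hpairval, if_pos hb2.2, hb2.1]
        have hxodd : ¬ ((x : ℕ) % 2 = 0) := by
          have := hb2.1; have := hb2.2; omega
        have h1 : G x y = ν y * G y x := gram_swap A ν v hv x y
        simp only [Rmodel, Matrix.of_apply, if_neg hb1, if_pos hb2]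
        have hδx : δ x = 1 := by simp [hδ, hxodd]
        have hδy : δ y = G y x := by
          simp only [hδ]
          rw [if_pos hb2.2, ← hyp]
        rw [hδx, hδy, h1, hνdef y, if_pos hb2.2]
        ring
      · simp only [Rmodel, Matrix.of_apply, if_neg hb1, if_neg hb2]
        rw [mul_zero, zero_mul]
        apply hGzero x y
        intro hyp
        have hyval : (y : ℕ) = if (x : ℕ) % 2 = 0 then (x : ℕ) + 1 else (x : ℕ) - 1 := by
          rw [hyp, hpairval]
        by_cases h : (x : ℕ) % 2 = 0
        · rw [if_pos h] at hyval
          exact hb1 ⟨hyval, h⟩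
        · rw [if_neg h] at hyval
          have hx1 : 1 ≤ (x : ℕ) := by omega
          exact hb2 ⟨by omega, by omega⟩
  have hQ := isUnit_Qmat A hA ν hinj v hv0 hv
  have hQT : IsUnit ((Qmat v)ᵀ).det := by rwa [det_transpose]
  refine ⟨((Qmat v)ᵀ)⁻¹ * diagonal δ, ?_, ?_⟩
  · rw [Matrix.isUnit_iff_isUnit_det, det_mul, det_diagonal]
    refine (Matrix.isUnit_nonsing_inv_det _ hQT).mul ?_
    rw [isUnit_iff_ne_zero]
    exact Finset.prod_ne_zero_iff.mpr fun x _ => hδ0 x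
  · have e1 : (((Qmat v)ᵀ)⁻¹ * diagonal δ)ᵀ = diagonal δ * (Qmat v)⁻¹ := by
      rw [transpose_mul, diagonal_transpose, transpose_nonsing_inv, transpose_transpose]
    rw [e1]
    have e2 : ((Qmat v)ᵀ)⁻¹ * ((Qmat v)ᵀ * A * Qmat v) * (Qmat v)⁻¹ = A := by
      rw [Matrix.mul_assoc ((Qmat v)ᵀ) A (Qmat v),
        ← Matrix.mul_assoc (((Qmat v)ᵀ)⁻¹) ((Qmat v)ᵀ) (A * Qmat v),
        Matrix.nonsing_inv_mul _ hQT, Matrix.one_mul,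
        Matrix.mul_assoc A (Qmat v) ((Qmat v)⁻¹), Matrix.mul_nonsing_inv _ hQ, Matrix.mul_one]
    have e3 : (Qmat v)ᵀ * A * Qmat v = diagonal δ * Rmodel n muext * diagonal δ := by
      rw [← gram_eq, ← hG, key]
    rw [e3] at e2
    rw [← e2]
    simp only [Matrix.mul_assoc]

def RmodelOdd (n : ℕ) (muext : ℕ → ℂ) : Matrix (Fin n) (Fin n) ℂ :=
  Matrix.of fun x y =>
    if (x : ℕ) = n - 1 ∧ (y : ℕ) = n - 1 then 1
    else if (y : ℕ) = (x : ℕ) + 1 ∧ (x : ℕ) % 2 = 0 then 1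
    else if (x : ℕ) = (y : ℕ) + 1 ∧ (y : ℕ) % 2 = 0 then muext ((y : ℕ) / 2) else 0

lemma assemble_odd (hn : n % 2 = 1) (A : Matrix (Fin n) (Fin n) ℂ)
    (hA : IsUnit A.det) (muext : ℕ → ℂ) (ν : Fin n → ℂ)
    (hνdef : ∀ x : Fin n, ν x = if (x : ℕ) = n - 1 then 1
      else if (x : ℕ) % 2 = 0 then muext ((x : ℕ) / 2) else (muext ((x : ℕ) / 2))⁻¹)
    (hmu0 : ∀ j, 2 * j < n - 1 → muext j ≠ 0)
    (hinj : Function.Injective ν)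
    (v : Fin n → Fin n → ℂ) (hv0 : ∀ x, v x ≠ 0)
    (hv : ∀ x, A *ᵥ v x = ν x • (Aᵀ *ᵥ v x)) :
    ∃ P : Matrix (Fin n) (Fin n) ℂ, IsUnit P ∧ A = P * RmodelOdd n muext * Pᵀ := by
  classical
  set pair : Fin n → Fin n := fun x =>
    if hlast : (x : ℕ) = n - 1 then x
    else if h : (x : ℕ) % 2 = 0 then ⟨(x : ℕ) + 1, by have := x.isLt; omega⟩
    else ⟨(x : ℕ) - 1, by have := x.isLt; omega⟩ with hpairdef
  have hpairval : ∀ x : Fin n, (pair x : ℕ) = if (x : ℕ) = n - 1 then (x : ℕ)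
      else if (x : ℕ) % 2 = 0 then (x : ℕ) + 1 else (x : ℕ) - 1 := by
    intro x
    rw [hpairdef]
    by_cases hlast : (x : ℕ) = n - 1
    · simp [hlast]
    · by_cases h : (x : ℕ) % 2 = 0 <;> simp [hlast, h]
  have hpair : ∀ x, ν x * ν (pair x) = 1 := by
    intro x
    have hx := x.isLt
    rw [hνdef, hνdef]
    by_cases hlast : (x : ℕ) = n - 1
    · have h1 : (pair x : ℕ) = (x : ℕ) := by rw [hpairval, if_pos hlast]
      rw [if_pos hlast, h1, if_pos hlast, one_mul]
    · by_cases h : (x : ℕ) % 2 = 0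
      · have h1 : (pair x : ℕ) = (x : ℕ) + 1 := by rw [hpairval, if_neg hlast, if_pos h]
        rw [if_neg hlast, if_pos h, h1, if_neg (by omega), if_neg (by omega),
          (by omega : ((x:ℕ)+1)/2 = (x:ℕ)/2)]
        exact mul_inv_cancel₀ (hmu0 _ (by omega))
      · have h1 : (pair x : ℕ) = (x : ℕ) - 1 := by rw [hpairval, if_neg hlast, if_neg h]
        rw [if_neg hlast, if_neg h, h1, if_neg (by omega), if_pos (by omega),
          (by omega : ((x:ℕ)-1)/2 = (x:ℕ)/2)]
        exact inv_mul_cancel₀ (hmu0 _ (by omega))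
  have hν0 : ∀ x, ν x ≠ 0 := by
    intro x h
    have := hpair x
    rw [h, zero_mul] at this
    exact zero_ne_one this
  have hone : ∀ x y, ν x * ν y = 1 → y = pair x := by
    intro x y h
    apply hinj
    have h1 := hpair x
    have := hν0 x
    apply mul_left_cancel₀ this
    rw [h, h1]
  set G := Gram A v with hG
  have hGunit : IsUnit G.det := by
    rw [hG, gram_eq, det_mul, det_mul, det_transpose]
    exact ((isUnit_Qmat A hA ν hinj v hv0 hv).mul hA).mul (isUnit_Qmat A hA ν hinj v hv0 hv)
  have hGzero : ∀ x y, y ≠ pair x → G x y = 0 := by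
    intro x y hy
    exact gram_eq_zero A ν v hv x y (fun hc => hy (hone x y hc))
  have ha : ∀ x, G x (pair x) ≠ 0 := by
    intro x h
    have : ∀ y, G x y = 0 := by
      intro y
      by_cases hy : y = pair x
      · rwa [hy]
      · exact hGzero x y hy
    exact (isUnit_iff_ne_zero.mp hGunit) (det_eq_zero_of_row_eq_zero x this)
  have hnpos : 0 < n := by omega
  set last : Fin n := ⟨n - 1, by omega⟩ with hlastdef
  have hpairlast : pair last = last := by
    apply Fin.ext
    rw [hpairval, if_pos (by rw [hlastdef])]
  have hcc : G last last ≠ 0 := by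
    have := ha last
    rwa [hpairlast] at this
  set γ : ℂ := Complex.exp (Complex.log (G last last) / 2) with hγ
  have hγ0 : γ ≠ 0 := Complex.exp_ne_zero _
  have hγ2 : γ * γ = G last last := by
    rw [hγ, ← Complex.exp_add, add_halves, Complex.exp_log hcc]
  set δ : Fin n → ℂ := fun x => if (x : ℕ) = n - 1 then γ
    else if (x : ℕ) % 2 = 0 then G x (pair x) else 1 with hδ
  have hδ0 : ∀ x, δ x ≠ 0 := by
    intro x
    by_cases hlast : (x : ℕ) = n - 1
    · simpa [hδ, hlast] using hγ0
    · by_cases h : (x : ℕ) % 2 = 0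
      · simpa [hδ, hlast, h] using ha x
      · simp [hδ, hlast, h]
  have key : G = diagonal δ * RmodelOdd n muext * diagonal δ := by
    ext x y
    rw [Matrix.mul_diagonal, Matrix.diagonal_mul]
    by_cases hb0 : (x : ℕ) = n - 1 ∧ (y : ℕ) = n - 1
    · have hxl : x = last := by apply Fin.ext; rw [hb0.1, hlastdef]
      have hyl : y = last := by apply Fin.ext; rw [hb0.2, hlastdef]
      have hR : RmodelOdd n muext x y = 1 := by
        simp only [RmodelOdd, Matrix.of_apply, if_pos hb0]
      have hδl : δ last = γ := by simp [hδ, hlastdef]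
      rw [hR, hxl, hyl, hδl, mul_one, hγ2]
    · by_cases hb1 : (y : ℕ) = (x : ℕ) + 1 ∧ (x : ℕ) % 2 = 0
      · have hxne : (x : ℕ) ≠ n - 1 := by
          have hy := y.isLt; have := hb1.1; have := hb1.2; omega
        have hyne : (y : ℕ) ≠ n - 1 := by
          have := hb1.1; have := hb1.2; omega
        have hyodd : ¬ ((y : ℕ) % 2 = 0) := by
          have := hb1.1; have := hb1.2; omega
        have hyp : y = pair x := by
          apply Fin.ext
          rw [hpairval, if_neg hxne, if_pos hb1.2, hb1.1]
        have hR : RmodelOdd n muext x y = 1 := by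
          simp only [RmodelOdd, Matrix.of_apply, if_neg hb0, if_pos hb1]
        have hδx : δ x = G x (pair x) := by simp [hδ, hxne, hb1.2]
        have hδy : δ y = 1 := by simp [hδ, hyne, hyodd]
        rw [hR, hδx, hδy, hyp, mul_one, mul_one]
      · by_cases hb2 : (x : ℕ) = (y : ℕ) + 1 ∧ (y : ℕ) % 2 = 0
        · have hyne : (y : ℕ) ≠ n - 1 := by
            have hx := x.isLt; have := hb2.1; have := hb2.2; omega
          have hxodd : ¬ ((x : ℕ) % 2 = 0) := by
            have := hb2.1; have := hb2.2; omega
          have hxne : (x : ℕ) ≠ n - 1 := by omega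
          have hyp : x = pair y := by
            apply Fin.ext
            rw [hpairval, if_neg hyne, if_pos hb2.2, hb2.1]
          have h1 : G x y = ν y * G y x := gram_swap A ν v hv x y
          have hR : RmodelOdd n muext x y = muext ((y : ℕ) / 2) := by
            simp only [RmodelOdd, Matrix.of_apply, if_neg hb0, if_neg hb1, if_pos hb2]
          have hδx : δ x = 1 := by simp [hδ, hxne, hxodd]
          have hδy : δ y = G y x := by
            simp only [hδ]
            rw [if_neg hyne, if_pos hb2.2, ← hyp]
          rw [hR, hδx, hδy, h1, hνdef y, if_neg hyne, if_pos hb2.2]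
          ring
        · have hR : RmodelOdd n muext x y = 0 := by
            simp only [RmodelOdd, Matrix.of_apply, if_neg hb0, if_neg hb1, if_neg hb2]
          rw [hR, mul_zero, zero_mul]
          apply hGzero x y
          intro hyp
          have hyval : (y : ℕ) = if (x : ℕ) = n - 1 then (x : ℕ)
              else if (x : ℕ) % 2 = 0 then (x : ℕ) + 1 else (x : ℕ) - 1 := by
            rw [hyp, hpairval]
          by_cases hlast : (x : ℕ) = n - 1
          · rw [if_pos hlast] at hyval
            exact hb0 ⟨hlast, by omega⟩
          · rw [if_neg hlast] at hyval
            by_cases h : (x : ℕ) % 2 = 0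
            · rw [if_pos h] at hyval
              exact hb1 ⟨hyval, h⟩
            · rw [if_neg h] at hyval
              exact hb2 ⟨by omega, by omega⟩
  have hQ := isUnit_Qmat A hA ν hinj v hv0 hv
  have hQT : IsUnit ((Qmat v)ᵀ).det := by rwa [det_transpose]
  refine ⟨((Qmat v)ᵀ)⁻¹ * diagonal δ, ?_, ?_⟩
  · rw [Matrix.isUnit_iff_isUnit_det, det_mul, det_diagonal]
    refine (Matrix.isUnit_nonsing_inv_det _ hQT).mul ?_
    rw [isUnit_iff_ne_zero]
    exact Finset.prod_ne_zero_iff.mpr fun x _ => hδ0 x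
  · have e1 : (((Qmat v)ᵀ)⁻¹ * diagonal δ)ᵀ = diagonal δ * (Qmat v)⁻¹ := by
      rw [transpose_mul, diagonal_transpose, transpose_nonsing_inv, transpose_transpose]
    rw [e1]
    have e2 : ((Qmat v)ᵀ)⁻¹ * ((Qmat v)ᵀ * A * Qmat v) * (Qmat v)⁻¹ = A := by
      rw [Matrix.mul_assoc ((Qmat v)ᵀ) A (Qmat v),
        ← Matrix.mul_assoc (((Qmat v)ᵀ)⁻¹) ((Qmat v)ᵀ) (A * Qmat v),
        Matrix.nonsing_inv_mul _ hQT, Matrix.one_mul,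
        Matrix.mul_assoc A (Qmat v) ((Qmat v)⁻¹), Matrix.mul_nonsing_inv _ hQ, Matrix.mul_one]
    have e3 : (Qmat v)ᵀ * A * Qmat v = diagonal δ * RmodelOdd n muext * diagonal δ := by
      rw [← gram_eq, ← hG, key]
    rw [e3] at e2
    rw [← e2]
    simp only [Matrix.mul_assoc]



lemma finSize_two (r : ℕ) : finSize (fun _ : Fin r => 2) = 2 * r := by
  induction r with
  | zero => rfl
  | succ m ih =>
      show 2 + finSize (fun _ : Fin m => 2) = 2 * (m + 1)
      rw [ih]; omega

lemma fin_split {m n : ℕ} (x : Fin (m + n)) :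
    (∃ i : Fin m, x = Fin.castAdd n i) ∨ (∃ i : Fin n, x = Fin.natAdd m i) := by
  rcases lt_or_ge (x : ℕ) m with h | h
  · exact Or.inl ⟨⟨x, h⟩, Fin.ext rfl⟩
  · refine Or.inr ⟨⟨(x : ℕ) - m, by have := x.isLt; omega⟩, Fin.ext ?_⟩
    simp [Fin.natAdd]
    omega

lemma dsum_ll {m n : ℕ} (A : Matrix (Fin m) (Fin m) ℂ) (B : Matrix (Fin n) (Fin n) ℂ)
    (i j : Fin m) : dsum A B (Fin.castAdd n i) (Fin.castAdd n j) = A i j := by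
  simp [dsum]

lemma dsum_rr {m n : ℕ} (A : Matrix (Fin m) (Fin m) ℂ) (B : Matrix (Fin n) (Fin n) ℂ)
    (i j : Fin n) : dsum A B (Fin.natAdd m i) (Fin.natAdd m j) = B i j := by
  simp [dsum]

lemma dsum_lr {m n : ℕ} (A : Matrix (Fin m) (Fin m) ℂ) (B : Matrix (Fin n) (Fin n) ℂ)
    (i : Fin m) (j : Fin n) : dsum A B (Fin.castAdd n i) (Fin.natAdd m j) = 0 := by
  simp [dsum]

lemma dsum_rl {m n : ℕ} (A : Matrix (Fin m) (Fin m) ℂ) (B : Matrix (Fin n) (Fin n) ℂ)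
    (i : Fin n) (j : Fin m) : dsum A B (Fin.natAdd m i) (Fin.castAdd n j) = 0 := by
  simp [dsum]

lemma pairH_apply (r : ℕ) (mu : Fin r → ℂ) (x y : Fin (finSize fun _ : Fin r => 2)) :
    pairH r mu x y =
      if (y : ℕ) = (x : ℕ) + 1 ∧ (x : ℕ) % 2 = 0 then 1
      else if (x : ℕ) = (y : ℕ) + 1 ∧ (y : ℕ) % 2 = 0 then
        (if h : (y : ℕ) / 2 < r then mu ⟨(y : ℕ) / 2, h⟩ else 0)
      else 0 := by
  induction r with
  | zero =>
      have hx := lt_of_lt_of_eq x.isLt (finSize_two 0)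
      omega
  | succ m ih =>
      have hx : pairH (m+1) mu x y
          = dsum (H2 (mu 0)) (pairH m (fun i => mu i.succ)) x y := rfl
      rw [hx]
      obtain ⟨i, rfl⟩ | ⟨i, rfl⟩ := fin_split (m := 2) (n := finSize fun _ : Fin m => 2) x <;>
        obtain ⟨j, rfl⟩ | ⟨j, rfl⟩ := fin_split (m := 2) (n := finSize fun _ : Fin m => 2) y
      · rw [dsum_ll]
        fin_cases i <;> fin_cases j <;>
          simp [H2, Fin.coe_castAdd] <;> norm_num
      · rw [dsum_lr]
        have hi := i.isLt
        simp only [Fin.coe_castAdd, Fin.coe_natAdd]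
        rw [if_neg (by omega), if_neg (by omega)]
      · rw [dsum_rl]
        have hj := j.isLt
        simp only [Fin.coe_castAdd, Fin.coe_natAdd]
        rw [if_neg (by omega), if_neg (by omega)]
      · rw [dsum_rr, ih]
        simp only [Fin.coe_natAdd]
        by_cases h1 : (j : ℕ) = (i : ℕ) + 1 ∧ (i : ℕ) % 2 = 0
        · rw [if_pos h1, if_pos (by omega : 2 + (j:ℕ) = 2 + (i:ℕ) + 1 ∧ (2 + (i:ℕ)) % 2 = 0)]
        · by_cases h2 : (i : ℕ) = (j : ℕ) + 1 ∧ (j : ℕ) % 2 = 0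
          · rw [if_neg h1, if_pos h2, if_neg (by omega), if_pos (by omega)]
            have hj : (j : ℕ) / 2 < m := by
              have := lt_of_lt_of_eq j.isLt (finSize_two m); omega
            rw [dif_pos hj, dif_pos (by omega : (2 + (j:ℕ)) / 2 < m + 1)]
            congr 1
            apply Fin.ext
            simp only [Fin.val_succ]
            omega
          · rw [if_neg h1, if_neg h2, if_neg (by omega), if_neg (by omega)]


lemma reindex_pairH_eq_Rmodel (r k : ℕ) (mu : Fin r → ℂ)
    (h : finSize (fun _ : Fin r => 2) = k) (muext : ℕ → ℂ)
    (hmuext : ∀ j : Fin r, muext (j : ℕ) = mu j) :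
    (Matrix.reindex (finCongr h) (finCongr h) (pairH r mu) : Matrix (Fin k) (Fin k) ℂ)
      = Rmodel k muext := by
  have hk : 2 * r = k := by rw [← finSize_two r, h]
  ext x y
  rw [Matrix.reindex_apply, Matrix.submatrix_apply, pairH_apply]
  have hxv : (((finCongr h).symm x : Fin _) : ℕ) = (x : ℕ) := rfl
  have hyv : (((finCongr h).symm y : Fin _) : ℕ) = (y : ℕ) := rfl
  simp only [hxv, hyv, Rmodel, Matrix.of_apply]
  by_cases hb1 : (y : ℕ) = (x : ℕ) + 1 ∧ (x : ℕ) % 2 = 0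
  · rw [if_pos hb1, if_pos hb1]
  · by_cases hb2 : (x : ℕ) = (y : ℕ) + 1 ∧ (y : ℕ) % 2 = 0
    · rw [if_neg hb1, if_pos hb2, if_neg hb1, if_pos hb2]
      have hy2 : (y : ℕ) / 2 < r := by have := y.isLt; omega
      rw [dif_pos hy2, ← hmuext ⟨(y : ℕ) / 2, hy2⟩]
    · rw [if_neg hb1, if_neg hb2, if_neg hb1, if_neg hb2]

lemma reindex_odd_eq_RmodelOdd (r k : ℕ) (mu : Fin r → ℂ)
    (h : finSize (fun _ : Fin r => 2) + 1 = k) (muext : ℕ → ℂ)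
    (hmuext : ∀ j : Fin r, muext (j : ℕ) = mu j) :
    (Matrix.reindex (finCongr h) (finCongr h) (dsum (pairH r mu) !![(1 : ℂ)])
      : Matrix (Fin k) (Fin k) ℂ) = RmodelOdd k muext := by
  have hk : 2 * r + 1 = k := by rw [← finSize_two r, h]
  ext x y
  rw [Matrix.reindex_apply, Matrix.submatrix_apply]
  obtain ⟨i, hi⟩ | ⟨i, hi⟩ := fin_split (m := finSize fun _ : Fin r => 2) (n := 1)
      ((finCongr h).symm x) <;>
    obtain ⟨j, hj⟩ | ⟨j, hj⟩ := fin_split (m := finSize fun _ : Fin r => 2) (n := 1)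
      ((finCongr h).symm y)
  · have hix : (i : ℕ) = (x : ℕ) := by
      have := congrArg Fin.val hi; simpa using this.symm
    have hjy : (j : ℕ) = (y : ℕ) := by
      have := congrArg Fin.val hj; simpa using this.symm
    have hibd := lt_of_lt_of_eq i.isLt (finSize_two r)
    have hjbd := lt_of_lt_of_eq j.isLt (finSize_two r)
    rw [hi, hj, dsum_ll, pairH_apply]
    simp only [RmodelOdd, Matrix.of_apply, hix, hjy]
    rw [if_neg (by omega : ¬((x : ℕ) = k - 1 ∧ (y : ℕ) = k - 1))]
    by_cases hb1 : (y : ℕ) = (x : ℕ) + 1 ∧ (x : ℕ) % 2 = 0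
    · rw [if_pos hb1, if_pos hb1]
    · by_cases hb2 : (x : ℕ) = (y : ℕ) + 1 ∧ (y : ℕ) % 2 = 0
      · rw [if_neg hb1, if_pos hb2, if_neg hb1, if_pos hb2]
        have hy2 : (y : ℕ) / 2 < r := by omega
        rw [dif_pos hy2, ← hmuext ⟨(y : ℕ) / 2, hy2⟩]
      · rw [if_neg hb1, if_neg hb2, if_neg hb1, if_neg hb2]
  · have hix : (i : ℕ) = (x : ℕ) := by
      have := congrArg Fin.val hi; simpa using this.symm
    have hjy : finSize (fun _ : Fin r => 2) + (j : ℕ) = (y : ℕ) := by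
      have := congrArg Fin.val hj; simpa using this.symm
    have hibd := lt_of_lt_of_eq i.isLt (finSize_two r)
    have hj1 : (j : ℕ) = 0 := by have := j.isLt; omega
    have hyv : (y : ℕ) = 2 * r := by rw [← hjy, hj1, finSize_two]; omega
    rw [hi, hj, dsum_lr]
    simp only [RmodelOdd, Matrix.of_apply]
    rw [if_neg (by omega), if_neg (by omega), if_neg (by omega)]
  · have hjy : (j : ℕ) = (y : ℕ) := by
      have := congrArg Fin.val hj; simpa using this.symm
    have hix : finSize (fun _ : Fin r => 2) + (i : ℕ) = (x : ℕ) := by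
      have := congrArg Fin.val hi; simpa using this.symm
    have hjbd := lt_of_lt_of_eq j.isLt (finSize_two r)
    have hi1 : (i : ℕ) = 0 := by have := i.isLt; omega
    have hxv : (x : ℕ) = 2 * r := by rw [← hix, hi1, finSize_two]; omega
    rw [hi, hj, dsum_rl]
    simp only [RmodelOdd, Matrix.of_apply]
    rw [if_neg (by omega), if_neg (by omega), if_neg (by omega)]
  · have hix : finSize (fun _ : Fin r => 2) + (i : ℕ) = (x : ℕ) := by
      have := congrArg Fin.val hi; simpa using this.symm
    have hjy : finSize (fun _ : Fin r => 2) + (j : ℕ) = (y : ℕ) := by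
      have := congrArg Fin.val hj; simpa using this.symm
    have hi1 : (i : ℕ) = 0 := by have := i.isLt; omega
    have hj1 : (j : ℕ) = 0 := by have := j.isLt; omega
    have hxv : (x : ℕ) = 2 * r := by rw [← hix, hi1, finSize_two]; omega
    have hyv : (y : ℕ) = 2 * r := by rw [← hjy, hj1, finSize_two]; omega
    rw [hi, hj, dsum_rr]
    have hone : !![(1 : ℂ)] i j = 1 := by
      fin_cases i <;> fin_cases j <;> simp
    rw [hone]
    simp only [RmodelOdd, Matrix.of_apply]
    rw [if_pos (by omega : (x : ℕ) = k - 1 ∧ (y : ℕ) = k - 1)]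

def Lam (k : ℕ) (c : ℕ → ℂ) (j : ℕ) : ℂ := (-1 : ℂ) ^ (k - 1) * (c j / c (k - 1 - j))

lemma Lam_ne_zero (k : ℕ) (c : ℕ → ℂ) (hc : ∀ i, c i ≠ 0) (j : ℕ) : Lam k c j ≠ 0 :=
  mul_ne_zero (pow_ne_zero _ (by norm_num)) (div_ne_zero (hc j) (hc _))

lemma neg_one_pow_split (k j : ℕ) (hj : j ≤ k - 1) :
    (-1 : ℂ) ^ (k - 1 - j) * (-1 : ℂ) ^ j = (-1 : ℂ) ^ (k - 1) := by
  rw [← pow_add]; congr 1; omega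

lemma neg_one_sq' (j : ℕ) : (-1 : ℂ) ^ j * (-1 : ℂ) ^ j = 1 := by
  rw [← pow_add]; exact Even.neg_one_pow ⟨j, rfl⟩

lemma dcoef_zero_iff (k : ℕ) (c : ℕ → ℂ) (hc : ∀ i, c i ≠ 0) (lam : ℂ) (j : ℕ)
    (hj : j ≤ k - 1) : dcoef k c lam j = 0 ↔ lam = Lam k c j := by
  have hs := neg_one_pow_split k j hj
  have hck : c (k - 1 - j) ≠ 0 := hc _
  have hcj : c j ≠ 0 := hc _
  have hne : ((-1 : ℂ) ^ j) ≠ 0 := pow_ne_zero _ (by norm_num)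
  have hd : c j / c (k - 1 - j) * c (k - 1 - j) = c j := div_mul_cancel₀ _ hck
  have key : Lam k c j * ((-1 : ℂ) ^ j * c (k - 1 - j)) = (-1 : ℂ) ^ (k - 1 - j) * c j := by
    rw [Lam]
    calc (-1 : ℂ) ^ (k-1) * (c j / c (k-1-j)) * ((-1 : ℂ) ^ j * c (k-1-j))
        = (-1 : ℂ) ^ (k-1) * (-1 : ℂ) ^ j * (c j / c (k-1-j) * c (k-1-j)) := by ring
      _ = (-1 : ℂ) ^ (k-1) * (-1 : ℂ) ^ j * c j := by rw [hd]
      _ = (-1 : ℂ) ^ (k-1-j) * c j := by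
          rw [← hs]
          linear_combination ((-1 : ℂ) ^ (k-1-j) * c j) * neg_one_sq' j
  rw [dcoef, ← key, sub_eq_zero]
  constructor
  · intro h
    exact (mul_right_cancel₀ (mul_ne_zero hne hck) h).symm
  · intro h
    rw [h]

lemma Lam_recip (k : ℕ) (c : ℕ → ℂ) (hc : ∀ i, c i ≠ 0) (j : ℕ) (hj : j ≤ k - 1) :
    Lam k c j * Lam k c (k - 1 - j) = 1 := by
  rw [Lam, Lam, (by omega : k - 1 - (k - 1 - j) = j)]
  have h1 : ((-1 : ℂ) ^ (k - 1)) * ((-1 : ℂ) ^ (k - 1)) = 1 := neg_one_sq' (k - 1)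
  have hck : c (k - 1 - j) ≠ 0 := hc _
  have hcj : c j ≠ 0 := hc _
  field_simp
  linear_combination h1

def cfun (k : ℕ) (ε : ℝ) (i : ℕ) : ℂ :=
  if i < k / 2 then 1 else (((1 + ε * ((k - i : ℕ) : ℝ))⁻¹ : ℝ) : ℂ)

lemma cfun_ne_zero (k : ℕ) (ε : ℝ) (hε : 0 < ε) (i : ℕ) : cfun k ε i ≠ 0 := by
  rw [cfun]
  by_cases h : i < k / 2
  · rw [if_pos h]; exact one_ne_zero
  · rw [if_neg h]
    have hpos : (0 : ℝ) < 1 + ε * ((k - i : ℕ) : ℝ) := by positivity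
    simp only [ne_eq, Complex.ofReal_eq_zero]
    positivity

def gval (k : ℕ) (ε : ℝ) (j : ℕ) : ℝ :=
  if j < k / 2 then 1 + ε * ((j : ℝ) + 1)
  else if 2 * j = k - 1 then 1 else (1 + ε * ((k - j : ℕ) : ℝ))⁻¹

lemma Lam_eq_gval (k : ℕ) (ε : ℝ) (hε : 0 < ε) (j : ℕ) (hj : j < k) :
    Lam k (cfun k ε) j = (-1 : ℂ) ^ (k - 1) * (((gval k ε j : ℝ)) : ℂ) := by
  rw [Lam]
  by_cases h1 : j < k / 2
  · rw [gval, if_pos h1, cfun, if_pos h1, cfun, if_neg (by omega : ¬ (k - 1 - j < k / 2)),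
      (by omega : (k - (k - 1 - j) : ℕ) = j + 1)]
    congr 1
    rw [one_div, ← Complex.ofReal_inv, inv_inv]
    push_cast
    ring
  · by_cases h2 : 2 * j = k - 1
    · rw [gval, if_neg h1, if_pos h2, (by omega : k - 1 - j = j),
        div_self (cfun_ne_zero k ε hε j)]
      norm_num
    · rw [gval, if_neg h1, if_neg h2, cfun, if_neg h1, cfun,
        if_pos (by omega : k - 1 - j < k / 2), div_one]

lemma gval_pos (k : ℕ) (ε : ℝ) (hε : 0 < ε) (j : ℕ) : 0 < gval k ε j := by
  rw [gval]
  by_cases h1 : j < k / 2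
  · rw [if_pos h1]; positivity
  · rw [if_neg h1]
    by_cases h2 : 2 * j = k - 1
    · rw [if_pos h2]; norm_num
    · rw [if_neg h2]; positivity

lemma gval_inj (k : ℕ) (ε : ℝ) (hε : 0 < ε) (j j' : ℕ) (hj : j < k) (hj' : j' < k)
    (h : gval k ε j = gval k ε j') : j = j' := by
  have hA : ∀ m, m < k / 2 → 1 < gval k ε m := by
    intro m hm
    rw [gval, if_pos hm]
    have : (0:ℝ) < ε * ((m : ℝ) + 1) := by positivity
    linarith
  have hM : ∀ m, 2 * m = k - 1 → gval k ε m = 1 := by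
    intro m hm
    rw [gval, if_neg (by omega), if_pos hm]
  have hB : ∀ m, ¬ (m < k / 2) → ¬ (2 * m = k - 1) → m < k → gval k ε m < 1 := by
    intro m h1 h2 h3
    rw [gval, if_neg h1, if_neg h2]
    have hge : (1:ℝ) ≤ ((k - m : ℕ) : ℝ) := by
      have : 1 ≤ k - m := by omega
      exact_mod_cast this
    have hgt : (1:ℝ) < 1 + ε * ((k - m : ℕ) : ℝ) := by nlinarith
    rw [inv_lt_one_iff₀]
    right; exact hgt
  by_cases c1 : j < k / 2 <;> by_cases c1' : j' < k / 2
  · have h1 : gval k ε j = 1 + ε * ((j:ℝ)+1) := by rw [gval, if_pos c1]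
    have h2 : gval k ε j' = 1 + ε * ((j':ℝ)+1) := by rw [gval, if_pos c1']
    rw [h1, h2] at h
    have : (j : ℝ) = (j' : ℝ) := by
      have := mul_left_cancel₀ (ne_of_gt hε) (by linarith : ε * ((j:ℝ)+1) = ε * ((j':ℝ)+1))
      linarith
    exact_mod_cast this
  · by_cases c2' : 2 * j' = k - 1
    · have := hA j c1; have := hM j' c2'; linarith
    · have := hA j c1; have := hB j' c1' c2' hj'; linarith
  · by_cases c2 : 2 * j = k - 1
    · have := hM j c2; have := hA j' c1'; linarith
    · have := hB j c1 c2 hj; have := hA j' c1'; linarith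
  · by_cases c2 : 2 * j = k - 1 <;> by_cases c2' : 2 * j' = k - 1
    · omega
    · have := hM j c2; have := hB j' c1' c2' hj'; linarith
    · have := hB j c1 c2 hj; have := hM j' c2'; linarith
    · have h1 : gval k ε j = (1 + ε * ((k - j : ℕ) : ℝ))⁻¹ := by rw [gval, if_neg c1, if_neg c2]
      have h2 : gval k ε j' = (1 + ε * ((k - j' : ℕ) : ℝ))⁻¹ := by
        rw [gval, if_neg c1', if_neg c2']
      rw [h1, h2] at h
      have hp : (0:ℝ) < 1 + ε * ((k - j : ℕ) : ℝ) := by positivity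
      have hp' : (0:ℝ) < 1 + ε * ((k - j' : ℕ) : ℝ) := by positivity
      have h3 : 1 + ε * ((k - j : ℕ) : ℝ) = 1 + ε * ((k - j' : ℕ) : ℝ) := by
        have := inv_injective h
        exact this
      have h4 : ((k - j : ℕ) : ℝ) = ((k - j' : ℕ) : ℝ) := by
        have := mul_left_cancel₀ (ne_of_gt hε) (by linarith : ε * ((k - j:ℕ):ℝ) = ε * ((k - j':ℕ):ℝ))
        linarith
      have h5 : (k - j : ℕ) = (k - j' : ℕ) := by exact_mod_cast h4
      omega

lemma Lam_inj (k : ℕ) (ε : ℝ) (hε : 0 < ε) (j j' : ℕ) (hj : j < k) (hj' : j' < k)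
    (h : Lam k (cfun k ε) j = Lam k (cfun k ε) j') : j = j' := by
  rw [Lam_eq_gval k ε hε j hj, Lam_eq_gval k ε hε j' hj'] at h
  have h1 := mul_left_cancel₀ (pow_ne_zero (k-1) (by norm_num : (-1:ℂ) ≠ 0)) h
  exact gval_inj k ε hε j j' hj hj' (by exact_mod_cast h1)

lemma Amat_isUnit (k : ℕ) (c : ℕ → ℂ) (hc : ∀ i, c i ≠ 0) : IsUnit (Amat k c).det := by
  classical
  set N := (Amat k c).submatrix id Fin.rev with hN
  have htri : N.BlockTriangular OrderDual.toDual := by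
    intro i j hij
    have hij' : (i : ℕ) < (j : ℕ) := hij
    show Amat k c i (Fin.rev j) = 0
    apply Amat_zero
    · rw [Fin.val_rev]; have := j.isLt; have := i.isLt; omega
    · rw [Fin.val_rev]; have := j.isLt; have := i.isLt; omega
  have hdet : N.det = ∏ i, N i i := Matrix.det_of_lowerTriangular N htri
  have hNne : N.det ≠ 0 := by
    rw [hdet]
    apply Finset.prod_ne_zero_iff.mpr
    intro i _
    have hdiag : N i i = (-1 : ℂ) ^ (k - 1 - (i : ℕ)) * c i := by
      show Amat k c i (Fin.rev i) = _
      apply Amat_anti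
      rw [Fin.val_rev]; have := i.isLt; omega
    rw [hdiag]
    exact mul_ne_zero (pow_ne_zero _ (by norm_num)) (hc i)
  have h2 : ((Amat k c).submatrix ⇑Fin.revPerm ⇑Fin.revPerm).det = (Amat k c).det :=
    det_submatrix_equiv_self Fin.revPerm _
  have h3 : Matrix.det (fun i => N (Fin.revPerm i)) = Equiv.Perm.sign Fin.revPerm * N.det :=
    det_permute _ N
  have h4 : (Matrix.det fun i => N (Fin.revPerm i))
      = ((Amat k c).submatrix ⇑Fin.revPerm ⇑Fin.revPerm).det := rfl
  rw [isUnit_iff_ne_zero, ← h2, ← h4, h3]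
  apply mul_ne_zero _ hNne
  rcases Int.units_eq_one_or (Equiv.Perm.sign Fin.revPerm) with hs | hs <;> rw [hs] <;> norm_num

set_option maxHeartbeats 2000000 in
lemma member_even (k : ℕ) (hk : 1 < k) (hkE : k % 2 = 0) (ε : ℝ) (hε : 0 < ε) :
    ∃ P : Matrix (Fin k) (Fin k) ℂ, IsUnit P ∧
      Amat k (cfun k ε) = P * Rmodel k (Lam k (cfun k ε)) * Pᵀ := by
  set c := cfun k ε with hc'
  have hc : ∀ i, c i ≠ 0 := cfun_ne_zero k ε hε
  have hA : IsUnit (Amat k c).det := Amat_isUnit k c hc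
  set π : Fin k → ℕ := fun x => if (x : ℕ) % 2 = 0 then (x : ℕ) / 2 else k - 1 - (x : ℕ) / 2
    with hπ'
  have hπlt : ∀ x : Fin k, π x < k := by
    intro x
    have := x.isLt
    rw [hπ']
    by_cases h : (x : ℕ) % 2 = 0 <;> simp only [h, if_true, if_false, reduceIte] <;> omega
  set ν : Fin k → ℂ := fun x => Lam k c (π x) with hν'
  have hνdef : ∀ x : Fin k, ν x = if (x : ℕ) % 2 = 0 then Lam k c ((x : ℕ) / 2)
      else (Lam k c ((x : ℕ) / 2))⁻¹ := by
    intro x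
    have hx := x.isLt
    by_cases h : (x : ℕ) % 2 = 0
    · rw [hν', if_pos h]
      show Lam k c (π x) = _
      simp only [hπ']
      rw [if_pos h]
    · rw [hν', if_neg h]
      show Lam k c (π x) = _
      simp only [hπ']
      rw [if_neg h]
      exact eq_inv_of_mul_eq_one_right (Lam_recip k c hc ((x : ℕ) / 2) (by omega))
  have hinj : Function.Injective ν := by
    intro x y h
    have hπx := hπlt x
    have hπy := hπlt y
    have h1 : π x = π y := Lam_inj k ε hε _ _ hπx hπy h
    have hx := x.isLt
    have hy := y.isLt
    apply Fin.ext
    simp only [hπ'] at h1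
    by_cases h2 : (x : ℕ) % 2 = 0 <;> by_cases h3 : (y : ℕ) % 2 = 0 <;>
      simp only [h2, h3, if_true, if_false, reduceIte] at h1 <;> omega
  have hexists : ∀ x : Fin k, ∃ v : Fin k → ℂ, v ≠ 0 ∧
      Amat k c *ᵥ v = ν x • ((Amat k c)ᵀ *ᵥ v) := by
    intro x
    apply exists_eigenvector k (by omega) c (ν x) ⟨π x, hπlt x⟩
    · exact (dcoef_zero_iff k c hc (ν x) (π x) (by have := hπlt x; omega)).mpr rfl
    · intro j hj hzero
      have hj2 : (j : ℕ) ≤ k - 1 := by have := j.isLt; omega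
      have := (dcoef_zero_iff k c hc (ν x) (j : ℕ) hj2).mp hzero
      have h2 : π x = (j : ℕ) := Lam_inj k ε hε _ _ (hπlt x) j.isLt this
      exact hj (Fin.ext h2.symm)
  choose v hv0 hv using hexists
  obtain ⟨P, hP, hPe⟩ := assemble_even hkE (Amat k c) hA (Lam k c) ν hνdef
    (fun j _ => Lam_ne_zero k c hc j) hinj v hv0 hv
  exact ⟨P, hP, hPe⟩

set_option maxHeartbeats 2000000 in
lemma member_odd (k : ℕ) (hk : 1 < k) (hkO : k % 2 = 1) (ε : ℝ) (hε : 0 < ε) :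
    ∃ P : Matrix (Fin k) (Fin k) ℂ, IsUnit P ∧
      Amat k (cfun k ε) = P * RmodelOdd k (Lam k (cfun k ε)) * Pᵀ := by
  set c := cfun k ε with hc'
  have hc : ∀ i, c i ≠ 0 := cfun_ne_zero k ε hε
  have hA : IsUnit (Amat k c).det := Amat_isUnit k c hc
  set π : Fin k → ℕ := fun x => if (x : ℕ) % 2 = 0 then (x : ℕ) / 2 else k - 1 - (x : ℕ) / 2
    with hπ'
  have hπlt : ∀ x : Fin k, π x < k := by
    intro x
    have := x.isLt
    rw [hπ']
    by_cases h : (x : ℕ) % 2 = 0 <;> simp only [h, if_true, if_false, reduceIte] <;> omega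
  set ν : Fin k → ℂ := fun x => Lam k c (π x) with hν'
  have hLmid : Lam k c (k / 2) = 1 := by
    rw [Lam_eq_gval k ε hε (k / 2) (by omega), gval, if_neg (by omega),
      if_pos (by omega : 2 * (k / 2) = k - 1)]
    have : (-1 : ℂ) ^ (k - 1) = 1 := Even.neg_one_pow (Nat.even_iff.mpr (by omega))
    rw [this]
    norm_num
  have hνdef : ∀ x : Fin k, ν x = if (x : ℕ) = k - 1 then 1
      else if (x : ℕ) % 2 = 0 then Lam k c ((x : ℕ) / 2)
      else (Lam k c ((x : ℕ) / 2))⁻¹ := by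
    intro x
    have hx := x.isLt
    by_cases hlast : (x : ℕ) = k - 1
    · rw [if_pos hlast, hν']
      show Lam k c (π x) = 1
      simp only [hπ']
      rw [if_pos (by omega), hlast, (by omega : (k - 1) / 2 = k / 2)]
      exact hLmid
    · rw [if_neg hlast]
      by_cases h : (x : ℕ) % 2 = 0
      · rw [hν', if_pos h]
        show Lam k c (π x) = _
        simp only [hπ']
        rw [if_pos h]
      · rw [hν', if_neg h]
        show Lam k c (π x) = _
        simp only [hπ']
        rw [if_neg h]
        exact eq_inv_of_mul_eq_one_right (Lam_recip k c hc ((x : ℕ) / 2) (by omega))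
  have hinj : Function.Injective ν := by
    intro x y h
    have hπx := hπlt x
    have hπy := hπlt y
    have h1 : π x = π y := Lam_inj k ε hε _ _ hπx hπy h
    have hx := x.isLt
    have hy := y.isLt
    apply Fin.ext
    simp only [hπ'] at h1
    by_cases h2 : (x : ℕ) % 2 = 0 <;> by_cases h3 : (y : ℕ) % 2 = 0 <;>
      simp only [h2, h3, if_true, if_false, reduceIte] at h1 <;> omega
  have hexists : ∀ x : Fin k, ∃ v : Fin k → ℂ, v ≠ 0 ∧
      Amat k c *ᵥ v = ν x • ((Amat k c)ᵀ *ᵥ v) := by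
    intro x
    apply exists_eigenvector k (by omega) c (ν x) ⟨π x, hπlt x⟩
    · exact (dcoef_zero_iff k c hc (ν x) (π x) (by have := hπlt x; omega)).mpr rfl
    · intro j hj hzero
      have hj2 : (j : ℕ) ≤ k - 1 := by have := j.isLt; omega
      have := (dcoef_zero_iff k c hc (ν x) (j : ℕ) hj2).mp hzero
      have h2 : π x = (j : ℕ) := Lam_inj k ε hε _ _ (hπlt x) j.isLt this
      exact hj (Fin.ext h2.symm)
  choose v hv0 hv using hexists
  obtain ⟨P, hP, hPe⟩ := assemble_odd hkO (Amat k c) hA (Lam k c) ν hνdef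
    (fun j _ => Lam_ne_zero k c hc j) hinj v hv0 hv
  exact ⟨P, hP, hPe⟩

lemma tendsto_cfun (k m : ℕ) :
    Filter.Tendsto (fun ε : ℝ => cfun k ε m) (nhdsWithin 0 (Set.Ioi 0)) (nhds 1) := by
  by_cases h : m < k / 2
  · simp only [cfun, if_pos h]
    exact tendsto_const_nhds
  · simp only [cfun, if_neg h]
    have hcont : ContinuousAt (fun ε : ℝ => (((1 + ε * ((k - m : ℕ) : ℝ))⁻¹ : ℝ) : ℂ)) 0 := by
      apply Complex.continuous_ofReal.continuousAt.comp
      apply ContinuousAt.inv₀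
      · fun_prop
      · norm_num
    have h0 : (((1 + (0:ℝ) * ((k - m : ℕ) : ℝ))⁻¹ : ℝ) : ℂ) = 1 := by norm_num
    have h2 := hcont.tendsto
    simp only [zero_mul] at h2 h0
    rw [h0] at h2
    exact tendsto_nhdsWithin_of_tendsto_nhds h2

lemma tendsto_Amat (k : ℕ) :
    Filter.Tendsto (fun ε : ℝ => Amat k (cfun k ε)) (nhdsWithin 0 (Set.Ioi 0))
      (nhds (Gamma k)) := by
  refine tendsto_pi_nhds.mpr ?_
  intro i
  rw [tendsto_pi_nhds]
  intro j
  by_cases h1 : (i : ℕ) + (j : ℕ) = k - 1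
  · have he : ∀ ε : ℝ, Amat k (cfun k ε) i j = (-1:ℂ) ^ (k-1-(i:ℕ)) * cfun k ε (i:ℕ) :=
      fun ε => Amat_anti _ i j h1
    simp only [he]
    have hg : Gamma k i j = (-1:ℂ) ^ (k-1-(i:ℕ)) * 1 := by
      simp [Gamma, h1]
    rw [hg]
    exact (tendsto_cfun k i).const_mul _
  · by_cases h2 : (i : ℕ) + (j : ℕ) = k
    · have he : ∀ ε : ℝ, Amat k (cfun k ε) i j = (-1:ℂ) ^ (k-1-(i:ℕ)) :=
        fun ε => Amat_sub _ i j h1 h2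
      simp only [he]
      have hg : Gamma k i j = (-1:ℂ) ^ (k-1-(i:ℕ)) := by simp [Gamma, h1, h2]
      rw [hg]
      exact tendsto_const_nhds
    · have he : ∀ ε : ℝ, Amat k (cfun k ε) i j = 0 := fun ε => Amat_zero _ i j h1 h2
      simp only [he]
      have hg : Gamma k i j = 0 := by simp [Gamma, h1, h2]
      rw [hg]
      exact tendsto_const_nhds

lemma Lam_IIa (k : ℕ) (ε : ℝ) (hε : 0 < ε) (i : ℕ) (hi : i < k / 2) :
    1 < ‖Lam k (cfun k ε) i‖ := by
  rw [Lam_eq_gval k ε hε i (by omega), norm_mul, norm_pow]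
  have h1 : ‖(-1 : ℂ)‖ = 1 := by simp
  rw [h1, one_pow, one_mul, Complex.norm_real, Real.norm_eq_abs]
  have hg : gval k ε i = 1 + ε * ((i:ℝ) + 1) := by rw [gval, if_pos hi]
  rw [hg, abs_of_pos (by positivity)]
  have : (0:ℝ) < ε * ((i:ℝ) + 1) := by positivity
  linarith

end L38

/-- **Lemma 3.8(i), congruence case.**  For `k > 1`, the matrix `Γ_k` belongs to the
closure of the congruence bundle of a direct sum of pairwise distinct `2 × 2`
Type II-(a) blocks (plus one `1 × 1` Type I block when `k` is odd). -/
theorem Gamma_mem_closure_congBundle (k : ℕ) (hk : 1 < k) :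
    (Even k →
      ∃ h : finSize (fun _ : Fin (k / 2) => 2) = k,
        Gamma k ∈
          closure {A : Matrix (Fin k) (Fin k) ℂ |
            ∃ (mu : Fin (k / 2) → ℂ) (P : Matrix (Fin k) (Fin k) ℂ),
              IsUnit P ∧ (∀ i, TypeIIaParam (mu i)) ∧
              (∀ i i', i ≠ i' → mu i ≠ mu i') ∧
              A = P * Matrix.reindex (finCongr h) (finCongr h) (pairH (k / 2) mu) * Pᵀ}) ∧
    (Odd k →
      ∃ h : finSize (fun _ : Fin (k / 2) => 2) + 1 = k,
        Gamma k ∈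
          closure {A : Matrix (Fin k) (Fin k) ℂ |
            ∃ (mu : Fin (k / 2) → ℂ) (P : Matrix (Fin k) (Fin k) ℂ),
              IsUnit P ∧ (∀ i, TypeIIaParam (mu i)) ∧
              (∀ i i', i ≠ i' → mu i ≠ mu i') ∧
              A = P * Matrix.reindex (finCongr h) (finCongr h)
                    (dsum (pairH (k / 2) mu) !![(1 : ℂ)]) * Pᵀ}) := by
  constructor
  · intro hke
    have hk2 : k % 2 = 0 := Nat.even_iff.mp hke
    have hsz : finSize (fun _ : Fin (k / 2) => 2) = k := by rw [L38.finSize_two]; omega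
    refine ⟨hsz, ?_⟩
    refine mem_closure_of_tendsto (L38.tendsto_Amat k) ?_
    filter_upwards [self_mem_nhdsWithin] with ε hε
    have hε' : (0:ℝ) < ε := hε
    obtain ⟨P, hP, hPe⟩ := L38.member_even k hk hk2 ε hε'
    refine ⟨fun i => L38.Lam k (L38.cfun k ε) (i : ℕ), P, hP, ?_, ?_, ?_⟩
    · intro i
      exact Or.inl (L38.Lam_IIa k ε hε' i i.isLt)
    · intro i i' hne h
      refine hne (Fin.ext (L38.Lam_inj k ε hε' _ _ ?_ ?_ h)) <;>
        [have := i.isLt; have := i'.isLt] <;> omega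
    · rw [L38.reindex_pairH_eq_Rmodel (k/2) k _ hsz (L38.Lam k (L38.cfun k ε))
        (fun j => rfl)]
      exact hPe
  · intro hko
    have hk2 : k % 2 = 1 := Nat.odd_iff.mp hko
    have hsz : finSize (fun _ : Fin (k / 2) => 2) + 1 = k := by rw [L38.finSize_two]; omega
    refine ⟨hsz, ?_⟩
    refine mem_closure_of_tendsto (L38.tendsto_Amat k) ?_
    filter_upwards [self_mem_nhdsWithin] with ε hε
    have hε' : (0:ℝ) < ε := hε
    obtain ⟨P, hP, hPe⟩ := L38.member_odd k hk hk2 ε hε'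
    refine ⟨fun i => L38.Lam k (L38.cfun k ε) (i : ℕ), P, hP, ?_, ?_, ?_⟩
    · intro i
      exact Or.inl (L38.Lam_IIa k ε hε' i i.isLt)
    · intro i i' hne h
      refine hne (Fin.ext (L38.Lam_inj k ε hε' _ _ ?_ ?_ h)) <;>
        [have := i.isLt; have := i'.isLt] <;> omega
    · rw [L38.reindex_odd_eq_RmodelOdd (k/2) k _ hsz (L38.Lam k (L38.cfun k ε))
        (fun j => rfl)]
      exact hPe
end
end
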